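/- arXiv:1211.1582 — 7 statements merged into one kernel-verified Lean document; each statement's English description precedes it below -/
import Mathlib

section
/- For every nonnegative integer n, the Bernoulli polynomial satisfies B_n(x) = n! ∑_{k=0}^{n} ( δ_k / (2^k (n-k)!) ∑_{0 ≤ l ≤ n-k, l even} C(n-k, l) B_{n-k-l} l! / (2^l ((2k+l)/2)! (l/2)!) ) T_k(x), where δ_0 = 1 and δ_k = 2 for k ≥ 1. -/
open Polynomial Nat Finset

lemma twoXT (s : ℤ) : 2 * X * Chebyshev.T ℚ s = Chebyshev.T ℚ (s+1) + Chebyshev.T ℚ (s-1) := by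
  have h := Chebyshev.T_mul_T ℚ s 1
  rw [Chebyshev.T_one] at h
  linear_combination h

lemma powA (m : ℕ) : C ((2:ℚ)^m) * X^m =
    ∑ j ∈ range (m+1), C (m.choose j : ℚ) * Chebyshev.T ℚ ((m:ℤ) - 2*j) := by
  induction m with
  | zero => simp
  | succ m ih =>
    have key : C ((2:ℚ)^(m+1)) * X^(m+1) = (2 * X) * (C ((2:ℚ)^m) * X^m) := by
      rw [pow_succ, pow_succ, C_mul, map_ofNat]
      ring
    rw [key, ih, Finset.mul_sum]
    have e1 : ∀ j ∈ range (m+1), 2 * X * (C (m.choose j : ℚ) * Chebyshev.T ℚ ((m:ℤ) - 2*j))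
        = C (m.choose j : ℚ) * Chebyshev.T ℚ ((m:ℤ) - 2*j + 1)
          + C (m.choose j : ℚ) * Chebyshev.T ℚ ((m:ℤ) - 2*j - 1) := by
      intro j _
      have := twoXT ((m:ℤ) - 2*j)
      linear_combination C (m.choose j : ℚ) * this
    rw [Finset.sum_congr rfl e1, Finset.sum_add_distrib]
    push_cast
    rw [Finset.sum_range_succ' (fun j => C (m.choose j : ℚ) * Chebyshev.T ℚ ((m:ℤ) - 2*j + 1)) m]
    rw [Finset.sum_range_succ' (fun j => C ((m+1).choose j : ℚ) * Chebyshev.T ℚ ((m:ℤ)+1 - 2*j)) (m+1)]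
    have h0 : ∑ j ∈ range m, C (m.choose (j+1):ℚ) * Chebyshev.T ℚ ((m:ℤ) - 2*(↑j+1) + 1)
        = ∑ j ∈ range (m+1), C (m.choose (j+1):ℚ) * Chebyshev.T ℚ ((m:ℤ) - 2*(↑j+1) + 1) := by
      rw [Finset.sum_range_succ, Nat.choose_succ_self]
      simp
    push_cast
    push_cast at h0
    rw [h0, add_right_comm, ← Finset.sum_add_distrib]
    have e2 : ∀ j ∈ range (m+1),
        C ((m.choose (j+1) : ℚ)) * Chebyshev.T ℚ ((m:ℤ) - 2*(↑j+1) + 1)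
          + C ((m.choose j : ℚ)) * Chebyshev.T ℚ ((m:ℤ) - 2*↑j - 1)
        = C (((m+1).choose (j+1) : ℚ)) * Chebyshev.T ℚ ((m:ℤ)+1 - 2*(↑j+1)) := by
      intro j _
      have harg : ((m:ℤ) - 2*(↑j+1) + 1) = ((m:ℤ)+1 - 2*(↑j+1)) := by ring
      have harg2 : ((m:ℤ) - 2*↑j - 1) = ((m:ℤ)+1 - 2*(↑j+1)) := by ring
      rw [harg, harg2, Nat.choose_succ_succ]
      push_cast
      rw [C_add]
      ring
    rw [Finset.sum_congr rfl e2]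
    norm_num

lemma powB (m : ℕ) :
    ∑ j ∈ range (m+1), C (m.choose j : ℚ) * Chebyshev.T ℚ ((m:ℤ) - 2*j)
      = ∑ k ∈ (range (m+1)).filter (fun k => (m+k) % 2 = 0),
          C ((if k = 0 then (1:ℚ) else 2) * (m.choose ((m-k)/2))) * Chebyshev.T ℚ (k:ℤ) := by
  rw [← Finset.sum_filter_add_sum_filter_not (range (m+1)) (fun j => 2*j ≤ m)
    (fun j => C (m.choose j : ℚ) * Chebyshev.T ℚ ((m:ℤ) - 2*j))]
  have h2 : ∑ j ∈ (range (m+1)).filter (fun j => ¬ 2*j ≤ m),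
      C (m.choose j : ℚ) * Chebyshev.T ℚ ((m:ℤ) - 2*j)
      = ∑ j ∈ (range (m+1)).filter (fun j => 2*j < m),
        C (m.choose j : ℚ) * Chebyshev.T ℚ ((m:ℤ) - 2*j) := by
    apply Finset.sum_nbij' (fun j => m - j) (fun j => m - j)
    · intro a ha; simp only [Finset.mem_filter, Finset.mem_range] at *; omega
    · intro a ha; simp only [Finset.mem_filter, Finset.mem_range] at *; omega
    · intro a ha; simp only [Finset.mem_filter, Finset.mem_range] at ha; omega
    · intro a ha; simp only [Finset.mem_filter, Finset.mem_range] at ha; omega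
    · intro a ha
      simp only [Finset.mem_filter, Finset.mem_range] at ha
      have hle : a ≤ m := by omega
      rw [Nat.choose_symm hle]
      have harg : ((m:ℤ) - 2*↑(m - a)) = -((m:ℤ) - 2*a) := by
        push_cast [hle]; ring
      rw [harg, Chebyshev.T_neg]
  rw [h2]
  have h3 : (range (m+1)).filter (fun j => 2*j < m)
      = ((range (m+1)).filter (fun j => 2*j ≤ m)).filter (fun j => ¬ 2*j = m) := by
    ext a; simp only [Finset.mem_filter, Finset.mem_range]; omega
  rw [h3, Finset.sum_filter (fun j => ¬ 2*j = m)
    (fun j => C (m.choose j : ℚ) * Chebyshev.T ℚ ((m:ℤ) - 2*j)), ← Finset.sum_add_distrib]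
  have h4 : ∀ j ∈ (range (m+1)).filter (fun j => 2*j ≤ m),
      C (m.choose j : ℚ) * Chebyshev.T ℚ ((m:ℤ) - 2*j)
        + (if ¬ 2*j = m then C (m.choose j : ℚ) * Chebyshev.T ℚ ((m:ℤ) - 2*j) else 0)
      = C ((if (m - 2*j : ℕ) = 0 then (1:ℚ) else 2) * (m.choose j)) * Chebyshev.T ℚ ((m:ℤ) - 2*j) := by
    intro j hj
    simp only [Finset.mem_filter, Finset.mem_range] at hj
    have h5 : (m - 2*j = 0) ↔ (2*j = m) := by omega
    simp only [h5]
    split_ifs with h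
    · rw [C_mul, map_one]; ring
    · rw [C_mul, map_ofNat]; ring
  rw [Finset.sum_congr rfl h4]
  apply Finset.sum_nbij' (fun j => m - 2*j) (fun k => (m - k)/2)
  · intro a ha; simp only [Finset.mem_filter, Finset.mem_range] at *; omega
  · intro a ha; simp only [Finset.mem_filter, Finset.mem_range] at *; omega
  · intro a ha; simp only [Finset.mem_filter, Finset.mem_range] at ha; omega
  · intro a ha; simp only [Finset.mem_filter, Finset.mem_range] at ha; omega
  · intro a ha
    simp only [Finset.mem_filter, Finset.mem_range] at ha
    have h1 : (m - (m - 2*a))/2 = a := by omega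
    have h2 : ((m - 2*a : ℕ) : ℤ) = (m:ℤ) - 2*a := by omega
    rw [h1, h2]

noncomputable def gc (m k : ℕ) : ℚ :=
  if k ≤ m ∧ (m + k) % 2 = 0 then (if k = 0 then 1 else 2) * (m.choose ((m-k)/2)) / 2^m else 0

lemma powAB (m N : ℕ) (hN : m ≤ N) : (X : ℚ[X])^m =
    ∑ k ∈ range (N+1), C (gc m k) * Chebyshev.T ℚ (k:ℤ) := by
  have h := powA m
  rw [powB] at h
  have h2 : (X : ℚ[X])^m = C (((2:ℚ)^m)⁻¹) *
      ∑ k ∈ (range (m+1)).filter (fun k => (m+k) % 2 = 0),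
        C ((if k = 0 then (1:ℚ) else 2) * (m.choose ((m-k)/2))) * Chebyshev.T ℚ (k:ℤ) := by
    rw [← h, ← mul_assoc, ← C_mul, inv_mul_cancel₀ (by positivity), C_1, one_mul]
  rw [h2, Finset.mul_sum]
  have h3 : ∀ k ∈ (range (m+1)).filter (fun k => (m+k) % 2 = 0),
      C (((2:ℚ)^m)⁻¹) * (C ((if k = 0 then (1:ℚ) else 2) * (m.choose ((m-k)/2))) * Chebyshev.T ℚ (k:ℤ))
      = C (gc m k) * Chebyshev.T ℚ (k:ℤ) := by
    intro k hk
    simp only [Finset.mem_filter, Finset.mem_range] at hk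
    have hg : gc m k = (if k = 0 then (1:ℚ) else 2) * (m.choose ((m-k)/2)) / 2^m := by
      rw [gc, if_pos]
      exact ⟨by omega, hk.2⟩
    rw [hg, ← mul_assoc, ← C_mul]
    congr 1
    ring
  rw [Finset.sum_congr rfl h3]
  apply Finset.sum_subset
  · intro x hx
    simp only [Finset.mem_filter, Finset.mem_range] at *
    omega
  · intro x hx hx2
    simp only [Finset.mem_filter, Finset.mem_range] at *
    have : gc m x = 0 := by
      rw [gc, if_neg]
      intro hc
      exact hx2 ⟨by omega, hc.2⟩
    rw [this, map_zero, zero_mul]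

lemma coefEq (n k : ℕ) (hk : k ≤ n) :
    ∑ m ∈ range (n+1), _root_.bernoulli (n-m) * (n.choose m : ℚ) * gc m k
    = (n ! : ℚ) * ((if k = 0 then (1 : ℚ) else 2) / (2 ^ k * (n - k)!) *
        ∑ l ∈ (Finset.range (n - k + 1)).filter (fun l => Even l),
          ((n - k).choose l : ℚ) * _root_.bernoulli (n - k - l) * l ! /
            (2 ^ l * ((2 * k + l) / 2)! * (l / 2)!)) := by
  rw [← Finset.sum_filter_add_sum_filter_not (range (n+1)) (fun m => k ≤ m ∧ (m+k) % 2 = 0)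
    (fun m => _root_.bernoulli (n-m) * (n.choose m : ℚ) * gc m k)]
  have hz : ∑ m ∈ (range (n+1)).filter (fun m => ¬ (k ≤ m ∧ (m+k) % 2 = 0)),
      _root_.bernoulli (n-m) * (n.choose m : ℚ) * gc m k = 0 := by
    apply Finset.sum_eq_zero
    intro m hm
    simp only [Finset.mem_filter, Finset.mem_range] at hm
    rw [gc, if_neg hm.2, mul_zero]
  rw [hz, add_zero, Finset.mul_sum, Finset.mul_sum]
  apply Finset.sum_nbij' (fun m => m - k) (fun l => k + l)
  · intro a ha
    simp only [Finset.mem_filter, Finset.mem_range] at *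
    constructor
    · omega
    · have : (a - k) % 2 = 0 := by omega
      exact ⟨(a-k)/2, by omega⟩
  · intro a ha
    simp only [Finset.mem_filter, Finset.mem_range] at *
    obtain ⟨ha1, t, ht⟩ := ha
    omega
  · intro a ha; simp only [Finset.mem_filter, Finset.mem_range] at ha; omega
  · intro a ha; simp only [Finset.mem_filter, Finset.mem_range] at ha; omega
  · intro m hm
    simp only [Finset.mem_filter, Finset.mem_range] at hm
    have hmn := hm.1
    have hkm := hm.2.1
    have hpar := hm.2.2
    obtain ⟨l, rfl⟩ : ∃ l, m = k + l := ⟨m - k, by omega⟩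
    obtain ⟨t, rfl⟩ : ∃ t, l = 2*t := ⟨l/2, by omega⟩
    have e1 : k + 2*t - k = 2*t := by omega
    have e2 : (2*t)/2 = t := by omega
    have e3 : (2*k + 2*t)/2 = k + t := by omega
    have e4 : n - (k + 2*t) = n - k - 2*t := by omega
    have e5 : k + 2*t - t = k + t := by omega
    rw [e1, e2, e3, e4]
    have hg : gc (k + 2*t) k = (if k = 0 then (1:ℚ) else 2) * ((k+2*t).choose ((k+2*t-k)/2)) / 2^(k+2*t) := by
      rw [gc, if_pos]
      exact ⟨by omega, by omega⟩
    rw [hg, e1, e2]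
    rw [Nat.cast_choose ℚ (show k + 2*t ≤ n by omega),
        Nat.cast_choose ℚ (show t ≤ k + 2*t by omega),
        Nat.cast_choose ℚ (show 2*t ≤ n - k by omega)]
    rw [e4, e5]
    have f1 : ((k+2*t)! : ℚ) ≠ 0 := by positivity
    have f2 : ((n-k-2*t)! : ℚ) ≠ 0 := by positivity
    have f3 : ((t)! : ℚ) ≠ 0 := by positivity
    have f4 : ((k+t)! : ℚ) ≠ 0 := by positivity
    have f5 : ((2*t)! : ℚ) ≠ 0 := by positivity
    have f6 : ((n-k)! : ℚ) ≠ 0 := by positivity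
    have f7 : ((2:ℚ))^(k+2*t) ≠ 0 := by positivity
    have f8 : ((2:ℚ))^k ≠ 0 := by positivity
    have f9 : ((2:ℚ))^(2*t) ≠ 0 := by positivity
    field_simp
    ring

theorem stmt_5 (n : ℕ) :
    Polynomial.bernoulli n =
      C (n ! : ℚ) *
        ∑ k ∈ Finset.range (n + 1),
          C ((if k = 0 then (1 : ℚ) else 2) / (2 ^ k * (n - k)!) *
              ∑ l ∈ (Finset.range (n - k + 1)).filter (fun l => Even l),
                ((n - k).choose l : ℚ) * _root_.bernoulli (n - k - l) * l ! /
                  (2 ^ l * ((2 * k + l) / 2)! * (l / 2)!)) *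
            Polynomial.Chebyshev.T ℚ k := by
  rw [Polynomial.bernoulli_def]
  have step1 : ∀ m ∈ range (n+1),
      Polynomial.monomial m (_root_.bernoulli (n-m) * (n.choose m : ℚ))
      = ∑ k ∈ range (n+1), C (_root_.bernoulli (n-m) * (n.choose m : ℚ) * gc m k)
          * Chebyshev.T ℚ (k:ℤ) := by
    intro m hm
    simp only [Finset.mem_range] at hm
    rw [← Polynomial.C_mul_X_pow_eq_monomial, powAB m n (by omega), Finset.mul_sum]
    apply Finset.sum_congr rfl
    intro k _
    rw [← mul_assoc, ← C_mul]
  rw [Finset.sum_congr rfl step1, Finset.sum_comm, Finset.mul_sum]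
  apply Finset.sum_congr rfl
  intro k hk
  simp only [Finset.mem_range] at hk
  rw [← Finset.sum_mul, ← map_sum, coefEq n k (by omega), map_mul, mul_assoc]
end

section
/- For every nonnegative integer n, the Euler polynomial satisfies E_n(x) = n! ∑_{k=0}^{n} ( δ_k / (2^k (n-k)!) ∑_{0 ≤ l ≤ n-k, l even} C(n-k, l) E_{n-k-l} l! / (2^l ((2k+l)/2)! (l/2)!) ) T_k(x), with δ_0 = 1 and δ_k = 2 for k ≥ 1. -/
open Polynomial Nat

/-- The Euler polynomials `E n`, defined by the recurrence
`E n + ∑_{k ≤ n} C(n,k) E k = 2 xⁿ`, equivalent to the generating function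
`2 e^{xt}/(e^t + 1) = ∑ E n (x) tⁿ/n!`. -/
noncomputable def eulerPoly : ℕ → ℚ[X]
  | n => X ^ n - C (1 / 2) * ∑ k : Fin n, C ((n.choose k : ℚ)) * eulerPoly k
decreasing_by exact k.isLt

lemma eulerPoly_def (n : ℕ) : eulerPoly n
    = X ^ n - C (1 / 2) * ∑ k ∈ Finset.range n, C ((n.choose k : ℚ)) * eulerPoly k := by
  rw [eulerPoly, Finset.sum_range fun k => C ((n.choose k : ℚ)) * eulerPoly k]

noncomputable def ee (m : ℕ) : ℚ := (eulerPoly m).eval 0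

lemma ee_zero : ee 0 = 1 := by
  have := eulerPoly_def 0
  simp at this
  simp [ee, this]

lemma ee_rec (n : ℕ) (hn : 0 < n) :
    -(1/2 : ℚ) * ∑ k ∈ Finset.range n, (n.choose k : ℚ) * ee k = ee n := by
  have := congrArg (Polynomial.eval 0) (eulerPoly_def n)
  simp [ee, eval_finset_sum, zero_pow hn.ne'] at this ⊢
  rw [this]

lemma eulerPoly_eq_sum (n : ℕ) :
    eulerPoly n = ∑ j ∈ Finset.range (n+1), C ((n.choose j : ℚ) * ee (n - j)) * X ^ j := by
  induction n using Nat.strong_induction_on with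
  | _ n ih =>
  rw [eulerPoly_def,
    Finset.sum_congr rfl (fun k hk => by rw [ih k (Finset.mem_range.mp hk)])]
  have h1 : ∀ k ∈ Finset.range n,
      C ((n.choose k : ℚ)) * ∑ j ∈ Finset.range (k+1), C ((k.choose j : ℚ) * ee (k-j)) * X^j
      = ∑ j ∈ Finset.range (k+1),
          C ((n.choose k : ℚ) * (k.choose j : ℚ) * ee (k-j)) * X^j := by
    intro k _
    rw [Finset.mul_sum]
    refine Finset.sum_congr rfl fun j _ => ?_
    rw [← mul_assoc, ← C_mul, mul_assoc]
  rw [Finset.sum_congr rfl h1]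
  rw [Finset.sum_comm' (t' := Finset.range n) (s' := fun j => Finset.Ico j n)
    (fun k j => by simp [Finset.mem_range, Finset.mem_Ico]; omega)]
  have h2 : ∀ j ∈ Finset.range n,
      ∑ k ∈ Finset.Ico j n, C ((n.choose k : ℚ) * (k.choose j : ℚ) * ee (k-j)) * X^j
      = C ((n.choose j : ℚ) * (-2 * ee (n - j))) * X ^ j := by
    intro j hj
    rw [Finset.sum_Ico_eq_sum_range]
    have h3 : ∀ i ∈ Finset.range (n - j),
        C ((n.choose (j+i) : ℚ) * ((j+i).choose j : ℚ) * ee ((j+i)-j)) * X^j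
        = C ((n.choose j : ℚ)) * X ^ j * C (((n-j).choose i : ℚ) * ee i) := by
      intro i hi
      simp only [Finset.mem_range] at hi
      have hch : n.choose (j+i) * (j+i).choose j = n.choose j * (n-j).choose i := by
        have := Nat.choose_mul (n := n) (k := j+i) (s := j) (by omega)
        simpa using this
      have hcast : ((n.choose (j+i) : ℚ)) * (((j+i).choose j : ℚ))
          = (n.choose j : ℚ) * ((n-j).choose i : ℚ) := by
        exact_mod_cast congrArg (fun x : ℕ => (x : ℚ)) hch
      rw [hcast]
      simp only [Nat.add_sub_cancel_left]
      rw [mul_assoc, C_mul]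
      ring
    rw [Finset.sum_congr rfl h3, ← Finset.mul_sum]
    have h4 : ∑ i ∈ Finset.range (n - j), C (((n-j).choose i : ℚ) * ee i)
        = C (-2 * ee (n - j)) := by
      rw [← map_sum]
      congr 1
      have := ee_rec (n - j) (by simp at hj; omega)
      linarith [this]
    rw [h4, mul_comm (C ((n.choose j : ℚ))) (X ^ j), mul_assoc, ← C_mul]
    ring
  rw [Finset.sum_congr rfl h2]
  rw [Finset.sum_range_succ]
  have : (n.choose n : ℚ) * ee (n - n) = 1 := by simp [ee_zero]
  rw [this]
  rw [Finset.mul_sum]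
  have h5 : ∀ j ∈ Finset.range n,
      C (1/2 : ℚ) * (C ((n.choose j : ℚ) * (-2 * ee (n - j))) * X ^ j)
      = -(C ((n.choose j : ℚ) * ee (n - j)) * X ^ j) := by
    intro j _
    rw [← mul_assoc, ← C_mul,
      show (1/2 : ℚ) * ((n.choose j : ℚ) * (-2 * ee (n - j)))
        = -((n.choose j : ℚ) * ee (n - j)) by ring, C_neg]
    ring
  rw [Finset.sum_congr rfl h5]
  simp [sub_eq_add_neg]
  ring

lemma two_X_T (m : ℤ) : 2 * X * Chebyshev.T ℚ m
    = Chebyshev.T ℚ (m+1) + Chebyshev.T ℚ (m-1) := by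
  linear_combination -Chebyshev.T_add_one ℚ m

lemma pow_X_T (p : ℕ) : (2:ℚ[X])^p * X^p
    = ∑ i ∈ Finset.range (p+1), C ((p.choose i : ℚ)) * Chebyshev.T ℚ ((p:ℤ) - 2*i) := by
  induction p with
  | zero => simp
  | succ p ih =>
    have step : (2:ℚ[X])^(p+1) * X^(p+1) = (2*X) * ((2:ℚ[X])^p * X^p) := by ring
    rw [step, ih, Finset.mul_sum]
    have h1 : ∀ i ∈ Finset.range (p+1),
        (2*X) * (C ((p.choose i:ℚ)) * Chebyshev.T ℚ ((p:ℤ) - 2*i))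
        = C ((p.choose i:ℚ)) * Chebyshev.T ℚ ((p:ℤ) - 2*i + 1)
          + C ((p.choose i:ℚ)) * Chebyshev.T ℚ ((p:ℤ) - 2*i - 1) := by
      intro i _
      rw [show (2*X) * (C ((p.choose i:ℚ)) * Chebyshev.T ℚ ((p:ℤ) - 2*i))
        = C ((p.choose i:ℚ)) * (2 * X * Chebyshev.T ℚ ((p:ℤ) - 2*i)) by ring,
        two_X_T, mul_add]
    rw [Finset.sum_congr rfl h1, Finset.sum_add_distrib]
    simp only [Nat.cast_add, Nat.cast_one]
    rw [Finset.sum_range_succ'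
      (fun i => C (((p+1).choose i : ℚ)) * Chebyshev.T ℚ ((p:ℤ) + 1 - 2*(i:ℕ)))]
    have h2 : ∀ i ∈ Finset.range (p+1),
        C (((p+1).choose (i+1) : ℚ)) * Chebyshev.T ℚ ((p:ℤ) + 1 - 2*((i+1:ℕ):ℤ))
        = C ((p.choose i : ℚ)) * Chebyshev.T ℚ ((p:ℤ) - 2*i - 1)
          + C ((p.choose (i+1) : ℚ)) * Chebyshev.T ℚ ((p:ℤ) - 2*i - 1) := by
      intro i _
      have hc : (((p+1).choose (i+1) : ℚ)) = (p.choose i : ℚ) + (p.choose (i+1) : ℚ) := by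
        rw [Nat.choose_succ_succ]; push_cast; ring
      have ha : (p:ℤ) + 1 - 2*((i+1:ℕ):ℤ) = (p:ℤ) - 2*i - 1 := by push_cast; ring
      rw [hc, ha, C_add, add_mul]
    rw [Finset.sum_congr rfl h2, Finset.sum_add_distrib]
    simp only [Nat.choose_zero_right, Nat.cast_one, map_one, one_mul, Nat.cast_zero,
      mul_zero, sub_zero]
    have h3 : ∑ i ∈ Finset.range (p+1), C ((p.choose i:ℚ)) * Chebyshev.T ℚ ((p:ℤ) - 2*i + 1)
        = ∑ i ∈ Finset.range (p+1), C ((p.choose (i+1) : ℚ)) * Chebyshev.T ℚ ((p:ℤ) - 2*i - 1)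
          + Chebyshev.T ℚ ((p:ℤ) + 1) := by
      rw [Finset.sum_range_succ
        (fun i => C ((p.choose (i+1) : ℚ)) * Chebyshev.T ℚ ((p:ℤ) - 2*i - 1))]
      rw [Nat.choose_succ_self]
      rw [Finset.sum_range_succ'
        (fun i => C ((p.choose i:ℚ)) * Chebyshev.T ℚ ((p:ℤ) - 2*i + 1))]
      simp only [Nat.cast_zero, Nat.choose_zero_right, Nat.cast_one, map_one, one_mul,
        Nat.cast_ofNat, map_zero, zero_mul, add_zero, mul_zero, sub_zero]
      congr 1
      refine Finset.sum_congr rfl fun i _ => ?_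
      congr 2
      push_cast; ring
    rw [h3]
    abel

lemma fold_T (p : ℕ) :
    ∑ i ∈ Finset.range (p+1), C ((p.choose i : ℚ)) * Chebyshev.T ℚ ((p:ℤ) - 2*i)
    = ∑ k ∈ Finset.range (p+1),
        C ((if k = 0 then (1:ℚ) else 2) *
            (if (p - k) % 2 = 0 then (p.choose ((p-k)/2) : ℚ) else 0))
          * Chebyshev.T ℚ (k:ℤ) := by
  set f : ℕ → ℚ[X] := fun i => C ((p.choose i : ℚ)) * Chebyshev.T ℚ ((p:ℤ) - 2*i) with hf
  set g : ℕ → ℚ[X] :=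
    fun i => C ((if p - 2*i = 0 then (1:ℚ) else 2) * (p.choose i : ℚ))
      * Chebyshev.T ℚ ((p:ℤ) - 2*i) with hg
  rw [← Finset.sum_filter_add_sum_filter_not (Finset.range (p+1)) (fun i => 2*i ≤ p) f]
  have h2 : ∑ i ∈ (Finset.range (p+1)).filter (fun i => ¬ 2*i ≤ p), f i
      = ∑ i ∈ (Finset.range (p+1)).filter (fun i => 2*i < p), f i := by
    refine Finset.sum_nbij' (fun i => p - i) (fun i => p - i) ?_ ?_ ?_ ?_ ?_
    · intro a ha; simp only [Finset.mem_filter, Finset.mem_range] at ha ⊢; omega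
    · intro a ha; simp only [Finset.mem_filter, Finset.mem_range] at ha ⊢; omega
    · intro a ha; simp only [Finset.mem_filter, Finset.mem_range] at ha; omega
    · intro a ha; simp only [Finset.mem_filter, Finset.mem_range] at ha; omega
    · intro a ha
      simp only [Finset.mem_filter, Finset.mem_range] at ha
      simp only [hf]
      rw [Nat.choose_symm (by omega)]
      congr 1
      rw [show ((p:ℤ) - 2*a) = -((p:ℤ) - 2*((p - a : ℕ) : ℤ)) by
        push_cast [Nat.cast_sub (by omega : a ≤ p)]; ring, Chebyshev.T_neg]
  rw [h2]
  have h3 : ∑ k ∈ Finset.range (p+1),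
        C ((if k = 0 then (1:ℚ) else 2) *
            (if (p - k) % 2 = 0 then (p.choose ((p-k)/2) : ℚ) else 0))
          * Chebyshev.T ℚ (k:ℤ)
      = ∑ k ∈ (Finset.range (p+1)).filter (fun k => (p - k) % 2 = 0),
        C ((if k = 0 then (1:ℚ) else 2) * (p.choose ((p-k)/2) : ℚ)) * Chebyshev.T ℚ (k:ℤ) := by
    rw [Finset.sum_filter]
    refine Finset.sum_congr rfl fun k _ => ?_
    by_cases h : (p - k) % 2 = 0 <;> simp [h]
  rw [h3]
  have h4 : ∑ k ∈ (Finset.range (p+1)).filter (fun k => (p - k) % 2 = 0),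
        C ((if k = 0 then (1:ℚ) else 2) * (p.choose ((p-k)/2) : ℚ)) * Chebyshev.T ℚ (k:ℤ)
      = ∑ i ∈ (Finset.range (p+1)).filter (fun i => 2*i ≤ p), g i := by
    refine Finset.sum_nbij' (fun k => (p - k)/2) (fun i => p - 2*i) ?_ ?_ ?_ ?_ ?_
    · intro a ha; simp only [Finset.mem_filter, Finset.mem_range] at ha ⊢; omega
    · intro a ha; simp only [Finset.mem_filter, Finset.mem_range] at ha ⊢; omega
    · intro a ha; simp only [Finset.mem_filter, Finset.mem_range] at ha; omega
    · intro a ha; simp only [Finset.mem_filter, Finset.mem_range] at ha; omega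
    · intro a ha
      simp only [Finset.mem_filter, Finset.mem_range] at ha
      simp only [hg]
      have e1 : p - 2 * ((p - a)/2) = a := by omega
      rw [e1]
      have e2 : (p:ℤ) - 2*(((p-a)/2 : ℕ):ℤ) = (a:ℤ) := by omega
      rw [e2]
  rw [h4]
  have hset1 : ((Finset.range (p+1)).filter (fun i => 2*i ≤ p)).filter (fun i => 2*i < p)
      = (Finset.range (p+1)).filter (fun i => 2*i < p) := by
    ext a; simp only [Finset.mem_filter, Finset.mem_range]; omega
  have hsplit : ∀ i ∈ (Finset.range (p+1)).filter (fun i => 2*i < p), g i = f i + f i := by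
    intro i hi
    simp only [Finset.mem_filter, Finset.mem_range] at hi
    simp only [hg, hf]
    rw [if_neg (by omega)]
    rw [show ((2:ℚ) * (p.choose i : ℚ)) = (p.choose i : ℚ) + (p.choose i : ℚ) by ring, C_add,
      add_mul]
  have hsame : ∀ i ∈ ((Finset.range (p+1)).filter (fun i => 2*i ≤ p)).filter
      (fun i => ¬ 2*i < p), g i = f i := by
    intro i hi
    simp only [Finset.mem_filter, Finset.mem_range] at hi
    simp only [hg, hf]
    rw [if_pos (by omega), one_mul]
  have hRHS : ∑ i ∈ (Finset.range (p+1)).filter (fun i => 2*i ≤ p), g i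
      = (∑ i ∈ (Finset.range (p+1)).filter (fun i => 2*i < p), f i
          + ∑ i ∈ (Finset.range (p+1)).filter (fun i => 2*i < p), f i)
        + ∑ i ∈ ((Finset.range (p+1)).filter (fun i => 2*i ≤ p)).filter
            (fun i => ¬ 2*i < p), f i := by
    rw [← Finset.sum_filter_add_sum_filter_not ((Finset.range (p+1)).filter (fun i => 2*i ≤ p))
      (fun i => 2*i < p) g, hset1, Finset.sum_congr rfl hsplit, Finset.sum_congr rfl hsame,
      Finset.sum_add_distrib]
  rw [hRHS]
  have hLHS : ∑ i ∈ (Finset.range (p+1)).filter (fun i => 2*i ≤ p), f i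
      = ∑ i ∈ (Finset.range (p+1)).filter (fun i => 2*i < p), f i
        + ∑ i ∈ ((Finset.range (p+1)).filter (fun i => 2*i ≤ p)).filter
            (fun i => ¬ 2*i < p), f i := by
    rw [← Finset.sum_filter_add_sum_filter_not ((Finset.range (p+1)).filter (fun i => 2*i ≤ p))
      (fun i => 2*i < p) f, hset1]
  rw [hLHS]
  abel

/-- `X^p` in the Chebyshev basis. -/
lemma X_pow_T (p : ℕ) : (X:ℚ[X])^p
    = ∑ k ∈ Finset.range (p+1),
        C ((1/2^p : ℚ) * ((if k = 0 then (1:ℚ) else 2) *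
            (if (p - k) % 2 = 0 then (p.choose ((p-k)/2) : ℚ) else 0)))
          * Chebyshev.T ℚ (k:ℤ) := by
  have h0 : (X:ℚ[X])^p = C ((1/2^p : ℚ)) * ((2:ℚ[X])^p * X^p) := by
    have h2 : ((2:ℚ[X]))^p = C ((2:ℚ))^p := by
      rw [show ((2:ℚ[X])) = C (2:ℚ) from (map_ofNat C 2).symm]
    rw [h2, ← mul_assoc, ← C_pow, ← C_mul]
    norm_num
  rw [h0, pow_X_T, fold_T, Finset.mul_sum]
  refine Finset.sum_congr rfl fun k _ => ?_
  rw [← mul_assoc, ← C_mul]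

lemma scalar_id (n k i : ℕ) (e : ℚ) (hk : k ≤ n) (hl : 2*i ≤ n - k) :
    (n ! : ℚ) * ((if k = 0 then (1:ℚ) else 2) / (2^k * (n-k)!) *
      (((n-k).choose (2*i) : ℚ) * e * (2*i)! / (2^(2*i) * (k+i)! * i !)))
    = ((n.choose (k+2*i) : ℚ) * e) *
        ((1/2^(k+2*i)) * ((if k = 0 then (1:ℚ) else 2) * ((k+2*i).choose i : ℚ))) := by
  rw [Nat.cast_choose ℚ (show 2*i ≤ n-k by omega),
    Nat.cast_choose ℚ (show k+2*i ≤ n by omega),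
    Nat.cast_choose ℚ (show i ≤ k+2*i by omega)]
  have h1 : n - k - 2*i = n - (k+2*i) := by omega
  have h2 : k + 2*i - i = k + i := by omega
  rw [h1, h2]
  have f1 : ((n-k)! : ℚ) ≠ 0 := Nat.cast_ne_zero.mpr (Nat.factorial_ne_zero _)
  have f2 : ((2*i)! : ℚ) ≠ 0 := Nat.cast_ne_zero.mpr (Nat.factorial_ne_zero _)
  have f3 : ((n-(k+2*i))! : ℚ) ≠ 0 := Nat.cast_ne_zero.mpr (Nat.factorial_ne_zero _)
  have f4 : ((k+i)! : ℚ) ≠ 0 := Nat.cast_ne_zero.mpr (Nat.factorial_ne_zero _)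
  have f5 : ((i)! : ℚ) ≠ 0 := Nat.cast_ne_zero.mpr (Nat.factorial_ne_zero _)
  have f6 : ((k+2*i)! : ℚ) ≠ 0 := Nat.cast_ne_zero.mpr (Nat.factorial_ne_zero _)
  field_simp
  ring_nf

theorem stmt_6 (n : ℕ) :
    eulerPoly n =
      C (n ! : ℚ) *
        ∑ k ∈ Finset.range (n + 1),
          C ((if k = 0 then (1 : ℚ) else 2) / (2 ^ k * (n - k)!) *
              ∑ l ∈ (Finset.range (n - k + 1)).filter (fun l => Even l),
                ((n - k).choose l : ℚ) * (eulerPoly (n - k - l)).eval 0 * l ! /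
                  (2 ^ l * ((2 * k + l) / 2)! * (l / 2)!)) *
            Polynomial.Chebyshev.T ℚ k := by
  rw [eulerPoly_eq_sum n]
  have hX : ∀ j ∈ Finset.range (n+1),
      C ((n.choose j : ℚ) * ee (n - j)) * (X:ℚ[X]) ^ j
      = ∑ k ∈ Finset.range (j+1),
          C ((n.choose j : ℚ) * ee (n - j) *
            ((1/2^j : ℚ) * ((if k = 0 then (1:ℚ) else 2) *
              (if (j - k) % 2 = 0 then (j.choose ((j-k)/2) : ℚ) else 0))))
            * Chebyshev.T ℚ (k:ℤ) := by
    intro j _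
    rw [X_pow_T j, Finset.mul_sum]
    refine Finset.sum_congr rfl fun k _ => ?_
    rw [← mul_assoc, ← C_mul]
  rw [Finset.sum_congr rfl hX]
  rw [Finset.sum_comm' (t' := Finset.range (n+1)) (s' := fun k => Finset.Ico k (n+1))
    (fun j k => by simp only [Finset.mem_range, Finset.mem_Ico]; omega)]
  rw [Finset.mul_sum]
  refine Finset.sum_congr rfl fun k hk => ?_
  simp only [Finset.mem_range] at hk
  rw [Finset.sum_Ico_eq_sum_range]
  rw [← Finset.sum_mul, ← map_sum, ← mul_assoc, ← C_mul]
  congr 2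
  -- now a scalar identity in ℚ
  have hrange : n + 1 - k = n - k + 1 := by omega
  rw [hrange, Finset.sum_filter, Finset.mul_sum, Finset.mul_sum]
  refine Finset.sum_congr rfl fun l hl => ?_
  simp only [Finset.mem_range] at hl
  by_cases he : Even l
  · rw [if_pos he]
    obtain ⟨i, rfl⟩ := he
    have e1 : i + i = 2 * i := by ring
    rw [e1] at hl ⊢
    have e2 : (2 * k + 2 * i) / 2 = k + i := by omega
    have e3 : (2 * i) / 2 = i := by omega
    have e4 : k + 2 * i - k = 2 * i := by omega
    have e5 : n - k - 2 * i = n - (k + 2 * i) := by omega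
    rw [e2, e3, e4, e5, if_pos (by omega : (2*i) % 2 = 0),
      show (2*i)/2 = i by omega,
      show ((eulerPoly (n - (k + 2*i))).eval 0) = ee (n - (k + 2*i)) from rfl]
    have := scalar_id n k i (ee (n - (k + 2*i))) (by omega) (by omega)
    linarith [this]
  · have h1 : (k + l - k) % 2 ≠ 0 := by
      have : l % 2 = 1 := Nat.odd_iff.mp (Nat.not_even_iff_odd.mp he)
      omega
    rw [if_neg he, if_neg h1]
    ring
end

section
/- For every nonnegative integer n, the Hermite polynomial satisfies H_n(x) = n! ∑_{k=0}^{n} ( δ_k ∑_{0 ≤ l ≤ n-k, l even} H_{n-k-l} / ((n-k-l)! ((2k+l)/2)! (l/2)!) ) T_k(x), with δ_0 = 1, δ_k = 2 for k ≥ 1. -/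
open Polynomial Nat

/-- The physicists' Hermite polynomials, with generating function
`e^{2xt - t²} = ∑ H n (x) tⁿ/n!`, via the recurrence `H_{n+1} = 2x H_n - H_n'`. -/
noncomputable def physHermite : ℕ → ℚ[X]
  | 0 => 1
  | n + 1 => C 2 * X * physHermite n - derivative (physHermite n)

def hc (n m : ℕ) : ℚ := if 2*m ≤ n then (-1)^m * n ! / (m ! * (n - 2*m)!) else 0

def ec (j k : ℕ) : ℚ :=
  if k ≤ j ∧ (j + k) % 2 = 0 then (if k = 0 then 1 else 2) * (j.choose ((j-k)/2)) else 0

lemma hc_rec (n m : ℕ) :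
    hc (n+1) (m+1) = hc n (m+1) - 2 * ((n - 2*m : ℕ) : ℚ) * hc n m := by
  unfold hc
  rcases le_or_gt (2*(m+1)) n with h | h
  · -- 2m+2 ≤ n
    obtain ⟨a, rfl⟩ : ∃ a, n = 2*m + 2 + a := ⟨n - (2*m+2), by omega⟩
    have h1 : 2*m+2+a - 2*m = a + 2 := by omega
    have h2 : 2*m+2+a+1 - 2*(m+1) = a + 1 := by omega
    have h3 : 2*m+2+a - 2*(m+1) = a := by omega
    rw [if_pos (by omega), if_pos (by omega), if_pos (by omega), h1, h2, h3]
    have e1 : ((2*m+2+a+1)! : ℚ) = (2*m+2+a+1) * (2*m+2+a)! := by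
      push_cast [Nat.factorial_succ]; ring
    rw [e1]
    have hm : ((m+1)! : ℚ) = (m+1) * m ! := by push_cast [Nat.factorial_succ]; ring
    have ha1 : ((a+1)! : ℚ) = (a+1) * a ! := by push_cast [Nat.factorial_succ]; ring
    have ha2 : ((a+2)! : ℚ) = (a+2) * ((a+1) * a !) := by
      push_cast [Nat.factorial_succ]; ring
    rw [hm, ha1, ha2]
    have fm : (m ! : ℚ) ≠ 0 := by positivity
    have fa : (a ! : ℚ) ≠ 0 := by positivity
    field_simp
    push_cast
    ring
  rcases le_or_gt (2*(m+1)) (n+1) with h' | h'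
  · -- n = 2m+1
    obtain rfl : n = 2*m + 1 := by omega
    rw [if_pos (by omega), if_neg (by omega), if_pos (by omega)]
    have h1 : 2*m+1+1 - 2*(m+1) = 0 := by omega
    have h2 : 2*m+1 - 2*m = 1 := by omega
    rw [h1, h2]
    have e1 : ((2*m+1+1)! : ℚ) = (2*m+2) * (2*m+1)! := by
      rw [show 2*m+1+1 = (2*m+1)+1 from rfl, Nat.factorial_succ]; push_cast; ring
    have hm : ((m+1)! : ℚ) = (m+1) * m ! := by push_cast [Nat.factorial_succ]; ring
    rw [e1, hm]
    have fm : (m ! : ℚ) ≠ 0 := by positivity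
    field_simp
    push_cast
    ring
  · -- 2m ≥ n
    rw [if_neg (by omega), if_neg (by omega)]
    rcases eq_or_lt_of_le (show n ≤ 2*m by omega) with h'' | h''
    · rw [if_pos (by omega)]
      have : (n - 2*m : ℕ) = 0 := by omega
      rw [this]
      norm_num
    · rw [if_neg (by omega)]; ring

lemma hc_zero (n : ℕ) : hc n 0 = 1 := by
  unfold hc
  rw [if_pos (by omega)]
  simp [Nat.factorial_ne_zero]

lemma hc_big {n m : ℕ} (h : n < 2*m) : hc n m = 0 := by
  unfold hc; rw [if_neg (by omega)]

lemma lemA (n : ℕ) :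
    physHermite n = ∑ m ∈ Finset.range (n+1), C (hc n m) * (C 2 * X)^(n - 2*m) := by
  induction n with
  | zero => simp [physHermite, hc_zero]
  | succ n ih =>
    rw [physHermite, ih]
    have hd : derivative (∑ m ∈ Finset.range (n+1), C (hc n m) * (C 2 * X)^(n - 2*m))
        = ∑ m ∈ Finset.range (n+1), C (2 * (n - 2*m : ℕ) * hc n m) * (C 2 * X)^(n - 2*m - 1) := by
      rw [derivative_sum]
      refine Finset.sum_congr rfl fun m _ => ?_
      rw [derivative_C_mul, derivative_pow, derivative_C_mul, derivative_X]
      simp only [mul_one, C_mul]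
      ring
    rw [hd, Finset.mul_sum]
    have hmul : ∀ m ∈ Finset.range (n+1),
        C 2 * X * (C (hc n m) * (C 2 * X)^(n - 2*m)) = C (hc n m) * (C 2 * X)^(n + 1 - 2*m) := by
      intro m hm
      rcases le_or_gt (2*m) n with h | h
      · rw [show n + 1 - 2*m = (n - 2*m) + 1 from by omega, pow_succ]; ring
      · rw [hc_big h]; simp
    rw [Finset.sum_congr rfl hmul]
    -- now massage RHS
    rw [Finset.sum_range_succ' (fun m => C (hc (n+1) m) * (C 2 * X)^(n + 1 - 2*m))]
    have he : ∀ m, n + 1 - 2*(m+1) = n - 2*m - 1 := fun m => by omega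
    have step : ∀ m ∈ Finset.range (n+1),
        C (hc (n+1) (m+1)) * (C 2 * X)^(n + 1 - 2*(m+1))
        = C (hc n (m+1)) * (C 2 * X)^(n + 1 - 2*(m+1))
          - C (2 * (n - 2*m : ℕ) * hc n m) * (C 2 * X)^(n - 2*m - 1) := by
      intro m hm
      rw [he m, hc_rec, C_sub, sub_mul, C_mul, C_mul]
    rw [Finset.sum_congr rfl step, Finset.sum_sub_distrib]
    have fold : ∑ m ∈ Finset.range (n+1), C (hc n (m+1)) * (C 2 * X)^(n + 1 - 2*(m+1))
          + C (hc (n+1) 0) * (C 2 * X)^(n + 1 - 2*0)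
        = ∑ m ∈ Finset.range (n+2), C (hc n m) * (C 2 * X)^(n + 1 - 2*m) := by
      rw [Finset.sum_range_succ' (fun m => C (hc n m) * (C 2 * X)^(n + 1 - 2*m))]
      rw [hc_zero, hc_zero]
    have last0 : ∑ m ∈ Finset.range (n+2), C (hc n m) * (C 2 * X)^(n + 1 - 2*m)
        = ∑ m ∈ Finset.range (n+1), C (hc n m) * (C 2 * X)^(n + 1 - 2*m) := by
      rw [Finset.sum_range_succ, hc_big (by omega)]
      simp
    rw [sub_add_eq_add_sub, fold, last0]

lemma ec_of_pos {j k : ℕ} (h1 : k ≤ j) (h2 : (j + k) % 2 = 0) :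
    ec j k = (if k = 0 then 1 else 2) * (j.choose ((j-k)/2)) := by
  unfold ec; rw [if_pos ⟨h1, h2⟩]

lemma ec_zero {j k : ℕ} (h : ¬(k ≤ j ∧ (j + k) % 2 = 0)) : ec j k = 0 := by
  unfold ec; rw [if_neg h]

lemma ec_rec (j k : ℕ) :
    ec (j+1) k = (if k = 0 then 0 else ec j (k-1)) + ec j (k+1)
      + (if k = 1 then ec j 0 else 0) := by
  rcases eq_or_ne k 0 with rfl | hk0
  · -- k = 0 : e (j+1) 0 = e j 1
    rw [if_pos rfl, if_neg (by omega : (0:ℕ) ≠ 1), zero_add, add_zero]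
    rcases Nat.even_or_odd j with ⟨a, rfl⟩ | ⟨a, rfl⟩
    · rw [ec_zero (by omega), ec_zero (by omega)]
    · rw [ec_of_pos (by omega) (by omega), ec_of_pos (by omega) (by omega)]
      rw [if_pos rfl, if_neg (by omega : (1:ℕ) ≠ 0)]
      have h1 : (2*a+1+1-0)/2 = a+1 := by omega
      have h2 : (2*a+1-1)/2 = a := by omega
      rw [h1, h2]
      have : (2*a+1+1).choose (a+1) = 2 * (2*a+1).choose a := by
        rw [show 2*a+1+1 = (2*a+1)+1 from rfl, Nat.choose_succ_succ']
        have : (2*a+1).choose (a+1) = (2*a+1).choose a := by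
          rw [← Nat.choose_symm (show a+1 ≤ 2*a+1 by omega),
              show 2*a+1-(a+1) = a by omega]
        omega
      rw [this]; push_cast; ring
  rcases eq_or_ne k 1 with rfl | hk1
  · -- k = 1
    rw [if_neg hk0, if_pos rfl]
    simp only [show (1:ℕ)-1 = 0 from rfl, show (1:ℕ)+1 = 2 from rfl]
    rcases Nat.even_or_odd j with ⟨a, rfl⟩ | ⟨a, rfl⟩
    · rcases eq_or_ne a 0 with rfl | ha
      · rw [ec_of_pos (by omega) (by omega), ec_of_pos (by omega) (by omega),
            ec_zero (by omega)]
        norm_num [Nat.choose]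
      · rw [ec_of_pos (by omega) (by omega), ec_of_pos (by omega) (by omega),
            ec_of_pos (by omega) (by omega)]
        rw [if_neg hk0, if_pos rfl, if_neg (by omega : (2:ℕ) ≠ 0)]
        have h1 : (a+a+1-1)/2 = a := by omega
        have h3 : (a+a-2)/2 = a - 1 := by omega
        have h4 : (a+a-0)/2 = a := by omega
        rw [h1, h3, h4]
        obtain ⟨b, rfl⟩ : ∃ b, a = b + 1 := ⟨a-1, by omega⟩
        have h5 : b + 1 - 1 = b := by omega
        rw [h5]
        have : ((b+1)+(b+1)+1).choose (b+1)
            = ((b+1)+(b+1)).choose b + ((b+1)+(b+1)).choose (b+1) := by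
          rw [show (b+1)+(b+1)+1 = ((b+1)+(b+1))+1 from rfl, Nat.choose_succ_succ']
        rw [this]; push_cast; ring
    · rw [ec_zero (by omega), ec_zero (by omega), ec_zero (by omega)]
      ring
  · -- k ≥ 2
    have hk2 : 2 ≤ k := by omega
    rw [if_neg hk0, if_neg hk1, add_zero]
    by_cases hp : (j+1+k) % 2 = 0
    · rcases le_or_gt k (j+1) with hle | hgt
      · rcases eq_or_lt_of_le hle with heq | hlt
        · -- k = j+1
          subst heq
          rw [ec_of_pos le_rfl hp, ec_of_pos (by omega) (by omega), ec_zero (by omega)]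
          rw [if_neg hk0, if_neg (by omega)]
          have h1 : (j+1-(j+1))/2 = 0 := by omega
          have h2 : (j-(j+1-1))/2 = 0 := by omega
          rw [h1, h2]
          simp
        · -- k ≤ j
          have hkj : k ≤ j := by omega
          obtain ⟨b, hb⟩ : ∃ b, j + 1 - k = 2*b := ⟨(j+1-k)/2, by omega⟩
          have hb1 : 1 ≤ b := by omega
          rw [ec_of_pos hle hp, ec_of_pos (by omega) (by omega)]
          rcases le_or_gt (k+1) j with hk1j | hk1j
          · rw [ec_of_pos hk1j (by omega)]
            rw [if_neg hk0, if_neg (by omega), if_neg (by omega)]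
            have h1 : (j+1-k)/2 = b := by omega
            have h2 : (j-(k-1))/2 = b := by omega
            have h3 : (j-(k+1))/2 = b - 1 := by omega
            rw [h1, h2, h3]
            obtain ⟨c, rfl⟩ : ∃ c, b = c + 1 := ⟨b-1, by omega⟩
            have h5 : c + 1 - 1 = c := by omega
            rw [h5]
            have hj : j = k + 2*c + 1 := by omega
            subst hj
            have : (k+2*c+1+1).choose (c+1)
                = (k+2*c+1).choose c + (k+2*c+1).choose (c+1) := by
              rw [show k+2*c+1+1 = (k+2*c+1)+1 from rfl, Nat.choose_succ_succ']
            rw [this]; push_cast; ring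
          · exfalso; omega
      · rw [ec_zero (by omega), ec_zero (by omega), ec_zero (by omega)]
        ring
    · rw [ec_zero (by omega), ec_zero (by omega), ec_zero (by omega)]
      ring

lemma lemB (j : ℕ) :
    (C 2 * X : ℚ[X])^j = ∑ k ∈ Finset.range (j+1), C (ec j k) * Chebyshev.T ℚ (k : ℤ) := by
  induction j with
  | zero =>
    simp [ec, Chebyshev.T_zero]
  | succ j ih =>
    have hC2 : (C 2 : ℚ[X]) = 2 := by
      rw [show (2:ℚ) = ((2:ℕ):ℚ) by norm_num, Polynomial.C_eq_natCast]
      norm_num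
    have key : ∀ s : ℤ, (C 2 * X : ℚ[X]) * Chebyshev.T ℚ s
        = Chebyshev.T ℚ (s+1) + Chebyshev.T ℚ (s-1) := by
      intro s
      rw [hC2, Chebyshev.T_add_one]
      ring
    set g : ℕ → ℚ[X] := fun t => if t = 0 then 0 else C (ec j (t-1)) * Chebyshev.T ℚ (t : ℤ)
      with hg
    set F : ℕ → ℚ[X] := fun k => C (ec j k) * Chebyshev.T ℚ ((k:ℤ) - 1) with hF
    rw [pow_succ, ih, Finset.sum_mul]
    have expand : ∀ k ∈ Finset.range (j+1),
        C (ec j k) * Chebyshev.T ℚ (k:ℤ) * (C 2 * X) = g (k+1) + F k := by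
      intro k hk
      rw [hg, hF]
      simp only []
      rw [if_neg (Nat.succ_ne_zero k)]
      have h1 : ((k+1 : ℕ) : ℤ) = (k:ℤ) + 1 := by push_cast; ring
      rw [h1, show k+1-1 = k from rfl]
      rw [mul_comm (C (ec j k) * _) (C 2 * X), ← mul_assoc, mul_comm (C 2 * X) (C (ec j k)),
          mul_assoc, key, mul_add]
    rw [Finset.sum_congr rfl expand, Finset.sum_add_distrib]
    -- Sum1
    have sum1 : ∑ k ∈ Finset.range (j+1), g (k+1) = ∑ t ∈ Finset.range (j+2), g t := by
      rw [Finset.sum_range_succ' g (j+1)]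
      simp [hg]
    -- Sum2
    have sum2 : ∑ k ∈ Finset.range (j+1), F k
        = (∑ k ∈ Finset.range (j+2), C (ec j (k+1)) * Chebyshev.T ℚ (k : ℤ))
          + ∑ k ∈ Finset.range (j+2),
              (if k = 1 then C (ec j 0) * Chebyshev.T ℚ (k : ℤ) else 0) := by
      rw [Finset.sum_range_succ' F j]
      have hFk : ∀ k, F (k+1) = C (ec j (k+1)) * Chebyshev.T ℚ (k : ℤ) := by
        intro k
        rw [hF]
        simp only []
        congr 1
        push_cast
        try ring
      have hF0 : F 0 = C (ec j 0) * Chebyshev.T ℚ (1 : ℤ) := by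
        rw [hF]
        simp only [Nat.cast_zero, zero_sub]
        rw [Chebyshev.T_neg_one, Chebyshev.T_one]
      rw [Finset.sum_congr rfl (fun k _ => hFk k), hF0]
      rw [Finset.sum_ite_eq' (Finset.range (j+2)) 1
          (fun k => C (ec j 0) * Chebyshev.T ℚ (k : ℤ))]
      rw [if_pos (by simp)]
      congr 1
      · apply Finset.sum_subset (Finset.range_subset_range.2 (by omega))
        intro k hk hk'
        simp only [Finset.mem_range] at hk hk'
        rw [ec_zero (by omega)]
        simp
    rw [sum1, sum2]
    -- now RHS
    have rhs : ∀ k ∈ Finset.range (j+2),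
        C (ec (j+1) k) * Chebyshev.T ℚ (k : ℤ)
        = g k + (C (ec j (k+1)) * Chebyshev.T ℚ (k : ℤ)
            + (if k = 1 then C (ec j 0) * Chebyshev.T ℚ (k : ℤ) else 0)) := by
      intro k hk
      rw [ec_rec, C_add, C_add, add_mul, add_mul, hg]
      simp only []
      split_ifs with h1 h2
      all_goals try omega
      all_goals try simp only [C_0, zero_mul, zero_add, add_zero]
      all_goals try ring
    rw [Finset.sum_congr rfl rhs, Finset.sum_add_distrib, Finset.sum_add_distrib]

lemma eval0_physHermite (n : ℕ) :
    (physHermite n).eval 0 = if Even n then (-1 : ℚ)^(n/2) * n ! / ((n/2)! : ℚ) else 0 := by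
  rw [lemA, eval_finset_sum]
  by_cases hn : Even n
  · rw [if_pos hn]
    obtain ⟨p, rfl⟩ := hn
    rw [Finset.sum_eq_single p]
    · have h0 : p + p - 2*p = 0 := by omega
      have h2 : (p+p)/2 = p := by omega
      simp only [eval_mul, eval_pow, eval_C, eval_X, mul_zero, h0, h2, pow_zero, mul_one]
      unfold hc
      rw [if_pos (by omega)]
      rw [show p + p - 2*p = 0 from by omega]
      simp
    · intro m hm hne
      simp only [eval_mul, eval_pow, eval_C, eval_X, mul_zero]
      rcases lt_or_gt_of_ne hne with h | h
      · rw [zero_pow (by omega : p + p - 2*m ≠ 0)]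
        · norm_num
      · rw [hc_big (by omega)]
        norm_num
    · intro h
      exact absurd (Finset.mem_range.2 (by omega)) h
  · rw [if_neg hn]
    apply Finset.sum_eq_zero
    intro m hm
    simp only [eval_mul, eval_pow, eval_C, eval_X, mul_zero]
    rcases le_or_gt (2*m) n with h | h
    · have : n - 2*m ≠ 0 := by
        intro h0
        exact hn ⟨m, by omega⟩
      rw [zero_pow this]
      norm_num
    · rw [hc_big h]
      norm_num

lemma lemC (n : ℕ) :
    physHermite n = ∑ k ∈ Finset.range (n+1),
      C (∑ m ∈ Finset.range (n+1), hc n m * ec (n - 2*m) k) * Chebyshev.T ℚ (k : ℤ) := by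
  rw [lemA]
  have step : ∀ m ∈ Finset.range (n+1),
      C (hc n m) * (C 2 * X)^(n - 2*m)
      = ∑ k ∈ Finset.range (n+1), C (hc n m * ec (n - 2*m) k) * Chebyshev.T ℚ (k : ℤ) := by
    intro m hm
    rw [lemB, Finset.mul_sum]
    rw [← Finset.sum_subset (Finset.range_subset_range.2 (show n - 2*m + 1 ≤ n + 1 by omega))]
    · exact Finset.sum_congr rfl fun k _ => by rw [← mul_assoc, ← C_mul]
    · intro k hk hk'
      simp only [Finset.mem_range] at hk hk'
      rw [ec_zero (by omega)]
      simp
  rw [Finset.sum_congr rfl step, Finset.sum_comm]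
  refine Finset.sum_congr rfl fun k _ => ?_
  rw [← Finset.sum_mul, ← map_sum C]

lemma lemD (n k : ℕ) (hk : k ≤ n) :
    ∑ m ∈ Finset.range (n+1), hc n m * ec (n - 2*m) k
    = (n ! : ℚ) * ((if k = 0 then (1:ℚ) else 2) *
        ∑ l ∈ (Finset.range (n - k + 1)).filter (fun l => Even l),
          (physHermite (n - k - l)).eval 0 /
            ((n - k - l)! * ((2 * k + l) / 2)! * (l / 2)!)) := by
  have fact_ne : ∀ t : ℕ, ((t ! : ℚ)) ≠ 0 := fun t => by positivity
  by_cases hpar : (n + k) % 2 = 0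
  · -- even case
    obtain ⟨P, hP⟩ : ∃ P, n = k + 2*P := ⟨(n-k)/2, by omega⟩
    subst hP
    set δ : ℚ := if k = 0 then (1:ℚ) else 2 with hδ
    -- LHS
    have lhs_eq : ∑ m ∈ Finset.range (k + 2*P + 1), hc (k + 2*P) m * ec (k + 2*P - 2*m) k
        = ∑ m ∈ Finset.range (P+1),
            δ * ((-1)^m * ((k + 2*P)! : ℚ) / (m ! * (P - m)! * (k + P - m)!)) := by
      rw [← Finset.sum_subset (Finset.range_subset_range.2 (show P + 1 ≤ k + 2*P + 1 by omega))]
      · refine Finset.sum_congr rfl fun m hm => ?_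
        simp only [Finset.mem_range] at hm
        have hm' : m ≤ P := by omega
        have h2m : 2*m ≤ k + 2*P := by omega
        unfold hc ec
        rw [if_pos h2m, if_pos ⟨by omega, by omega⟩]
        have h1 : (k + 2*P - 2*m - k)/2 = P - m := by omega
        rw [h1]
        rw [Nat.cast_choose ℚ (show P - m ≤ k + 2*P - 2*m by omega)]
        have h2 : k + 2*P - 2*m - (P - m) = k + P - m := by omega
        rw [h2, ← hδ]
        field_simp
      · intro m hm hm'
        simp only [Finset.mem_range] at hm hm'
        rcases le_or_gt (2*m) (k + 2*P) with h | h
        · rw [ec_zero (by omega)]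
          ring
        · rw [hc_big h]
          ring
    rw [lhs_eq]
    -- RHS sum reindex
    have hnk : k + 2*P - k = 2*P := by omega
    rw [hnk]
    have rhs_eq : ∑ l ∈ (Finset.range (2*P + 1)).filter (fun l => Even l),
          (physHermite (2*P - l)).eval 0 /
            (((2*P - l)! : ℚ) * (((2 * k + l) / 2)! : ℚ) * ((l / 2)! : ℚ))
        = ∑ q ∈ Finset.range (P+1),
            (-1 : ℚ)^(P - q) / (((P - q)! : ℚ) * ((k + q)! : ℚ) * ((q)! : ℚ)) := by
      refine Finset.sum_nbij' (fun l => l / 2) (fun q => 2 * q) ?_ ?_ ?_ ?_ ?_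
      · intro l hl
        simp only [Finset.mem_filter, Finset.mem_range] at hl
        simp only [Finset.mem_range]
        omega
      · intro q hq
        simp only [Finset.mem_range] at hq
        simp only [Finset.mem_filter, Finset.mem_range]
        exact ⟨by omega, ⟨q, by ring⟩⟩
      · intro l hl
        simp only [Finset.mem_filter, Finset.mem_range] at hl
        obtain ⟨-, t, ht⟩ := hl
        show 2 * (l / 2) = l
        omega
      · intro q hq
        show 2 * q / 2 = q
        omega
      · intro l hl
        simp only [Finset.mem_filter, Finset.mem_range] at hl
        obtain ⟨hl1, t, ht⟩ := hl
        have h1 : 2*P - l = 2*(P - l/2) := by omega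
        have h2 : (2*k + l)/2 = k + l/2 := by omega
        rw [h1, h2, eval0_physHermite]
        rw [if_pos ⟨P - l/2, by ring⟩]
        have h3 : 2*(P - l/2)/2 = P - l/2 := by omega
        rw [h3]
        field_simp
    rw [rhs_eq]
    rw [← Finset.sum_range_reflect
      (fun q => (-1 : ℚ)^(P - q) / (((P - q)! : ℚ) * ((k + q)! : ℚ) * ((q)! : ℚ))) (P+1)]
    simp only [Nat.add_sub_cancel]
    rw [Finset.mul_sum, Finset.mul_sum]
    refine Finset.sum_congr rfl fun m hm => ?_
    simp only [Finset.mem_range] at hm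
    have e1 : P - (P - m) = m := by omega
    have e2 : k + (P - m) = k + P - m := by omega
    rw [e1, e2]
    ring
  · -- odd case : both sides vanish
    have lhs0 : ∑ m ∈ Finset.range (n+1), hc n m * ec (n - 2*m) k = 0 := by
      apply Finset.sum_eq_zero
      intro m hm
      rcases le_or_gt (2*m) n with h | h
      · rw [ec_zero (by omega)]
        ring
      · rw [hc_big h]
        ring
    have rhs0 : ∑ l ∈ (Finset.range (n - k + 1)).filter (fun l => Even l),
          (physHermite (n - k - l)).eval 0 /
            (((n - k - l)! : ℚ) * (((2 * k + l) / 2)! : ℚ) * ((l / 2)! : ℚ)) = 0 := by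
      apply Finset.sum_eq_zero
      intro l hl
      simp only [Finset.mem_filter, Finset.mem_range] at hl
      obtain ⟨hl1, t, ht⟩ := hl
      rw [eval0_physHermite, if_neg, zero_div]
      rw [Nat.even_iff]
      omega
    rw [lhs0, rhs0]
    simp

theorem stmt_7 (n : ℕ) :
    physHermite n =
      C (n ! : ℚ) *
        ∑ k ∈ Finset.range (n + 1),
          C ((if k = 0 then (1 : ℚ) else 2) *
              ∑ l ∈ (Finset.range (n - k + 1)).filter (fun l => Even l),
                (physHermite (n - k - l)).eval 0 /
                  ((n - k - l)! * ((2 * k + l) / 2)! * (l / 2)!)) *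
            Polynomial.Chebyshev.T ℚ k := by
  rw [lemC, Finset.mul_sum]
  refine Finset.sum_congr rfl fun k hk => ?_
  simp only [Finset.mem_range] at hk
  rw [← mul_assoc, ← C_mul, lemD n k (by omega)]
end

section
/- For every nonnegative integer n, B_n(x) = n! ∑_{k=0}^{n} ( (k+1)/2^k ∑_{0 ≤ l ≤ n-k, l even} B_{n-k-l} / (2^l (n-k-l)! ((2k+l+2)/2)! (l/2)!) ) U_k(x). -/
open Polynomial Nat Finset

def acoef (m k : ℕ) : ℚ :=
  if k ≤ m ∧ 2 ∣ (m + k) then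
    ((k : ℚ) + 1) * m ! / (2 ^ m * ((m - k) / 2)! * ((m + k) / 2 + 1)!) else 0

lemma acoef_of_lt {m k : ℕ} (h : m < k) : acoef m k = 0 := by
  rw [acoef, if_neg]; omega

lemma acoef_of_odd {m k : ℕ} (h : ¬ 2 ∣ (m + k)) : acoef m k = 0 := by
  rw [acoef, if_neg]; tauto

lemma acoef_val (k j : ℕ) :
    acoef (k + 2 * j) k = ((k : ℚ) + 1) * (k + 2 * j)! / (2 ^ (k + 2 * j) * j ! * (k + j + 1)!) := by
  rw [acoef, if_pos ⟨by omega, by omega⟩,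
    show (k + 2 * j - k) / 2 = j from by omega,
    show (k + 2 * j + k) / 2 + 1 = k + j + 1 from by omega]

lemma fact_cast_succ (a : ℕ) : ((a+1)! : ℚ) = (a+1) * a ! := by
  rw [Nat.factorial_succ]; push_cast; ring

lemma acoef_rec_succ (m k : ℕ) :
    acoef (m + 1) (k + 1) = acoef m k / 2 + acoef m (k + 2) / 2 := by
  by_cases h2 : 2 ∣ (m + k)
  · by_cases hk : k ≤ m
    · obtain ⟨j, hj⟩ : ∃ j, m = k + 2 * j := ⟨(m - k) / 2, by omega⟩
      subst hj
      have hfj : ((j)! : ℚ) ≠ 0 := Nat.cast_ne_zero.2 (Nat.factorial_ne_zero _)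
      have hfm : (((k + 2*j))! : ℚ) ≠ 0 := Nat.cast_ne_zero.2 (Nat.factorial_ne_zero _)
      have hfg : (((k + j + 1))! : ℚ) ≠ 0 := Nat.cast_ne_zero.2 (Nat.factorial_ne_zero _)
      have hp : (2:ℚ) ^ (k + 2 * j) ≠ 0 := by positivity
      have e1 : acoef (k + 2*j + 1) (k+1)
          = ((k:ℚ)+2) * ((k + 2*j + 1) * (k + 2*j)!) /
            (2 ^ (k + 2*j) * 2 * j ! * ((k+j+2) * (k+j+1)!)) := by
        rw [acoef, if_pos ⟨by omega, by omega⟩,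
          show (k + 2*j + 1 - (k+1)) / 2 = j from by omega,
          show (k + 2*j + 1 + (k+1)) / 2 + 1 = (k+j+1)+1 from by omega,
          fact_cast_succ (k+j+1),
          show (k + 2*j + 1)! = ((k+2*j)+1)! from rfl, fact_cast_succ (k+2*j)]
        push_cast
        ring
      have e2 : acoef (k + 2*j) k
          = ((k : ℚ) + 1) * (k + 2*j)! / (2 ^ (k + 2*j) * j ! * ((k+j+1)!)) := acoef_val k j
      rw [e1, e2]
      rcases j with _ | j
      · rw [acoef_of_lt (by omega)]
        field_simp
        push_cast
        ring
      · have e3 : acoef (k + 2*(j+1)) (k+2)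
            = ((k:ℚ)+3) * (k + 2*(j+1))! /
              (2 ^ (k + 2*(j+1)) * j ! * ((k+j+3) * ((k+j+2) * (k+j+1)!))) := by
          rw [acoef, if_pos ⟨by omega, by omega⟩,
            show (k + 2*(j+1) - (k+2)) / 2 = j from by omega,
            show (k + 2*(j+1) + (k+2)) / 2 + 1 = ((k+j+2)+1) from by omega,
            fact_cast_succ (k+j+2), fact_cast_succ (k+j+1)]
          push_cast
          ring
        rw [e3, fact_cast_succ j,
          show k + (j+1) + 1 = (k+j+1)+1 from by omega, fact_cast_succ (k+j+1)]
        have hfj' : ((j)! : ℚ) ≠ 0 := Nat.cast_ne_zero.2 (Nat.factorial_ne_zero _)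
        field_simp
        push_cast
        ring
    · rw [acoef_of_lt (by omega), acoef_of_lt (by omega), acoef_of_lt (by omega)]
      norm_num
  · rw [acoef_of_odd (by omega), acoef_of_odd (by omega), acoef_of_odd (by omega)]
    norm_num

lemma acoef_rec_zero (m : ℕ) : acoef (m + 1) 0 = acoef m 1 / 2 := by
  by_cases h2 : 2 ∣ (m + 1)
  · obtain ⟨j, hj⟩ : ∃ j, m = 2 * j + 1 := ⟨(m - 1) / 2, by omega⟩
    subst hj
    have e1 : acoef (2*j + 1 + 1) 0
        = (1:ℚ) * ((2*j+2) * (2*j+1)!) / (2 ^ (2*j+1) * 2 * ((j+1) * j !) * ((j+2) * (j+1)!)) := by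
      rw [acoef, if_pos ⟨by omega, by omega⟩,
        show (2*j + 1 + 1 - 0) / 2 = j+1 from by omega,
        show (2*j + 1 + 1 + 0) / 2 + 1 = (j+1)+1 from by omega,
        fact_cast_succ (j+1), fact_cast_succ j,
        show (2*j+1+1)! = ((2*j+1)+1)! from rfl, fact_cast_succ (2*j+1)]
      push_cast
      ring
    have e2 : acoef (2*j + 1) 1
        = (2:ℚ) * (2*j+1)! / (2 ^ (2*j+1) * j ! * ((j+2) * (j+1)!)) := by
      rw [acoef, if_pos ⟨by omega, by omega⟩,
        show (2*j + 1 - 1) / 2 = j from by omega,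
        show (2*j + 1 + 1) / 2 + 1 = (j+1)+1 from by omega,
        fact_cast_succ (j+1)]
      push_cast
      ring
    rw [e1, e2]
    have hfj : ((j)! : ℚ) ≠ 0 := Nat.cast_ne_zero.2 (Nat.factorial_ne_zero _)
    have hf1 : (((j+1))! : ℚ) ≠ 0 := Nat.cast_ne_zero.2 (Nat.factorial_ne_zero _)
    have hfm : (((2*j+1))! : ℚ) ≠ 0 := Nat.cast_ne_zero.2 (Nat.factorial_ne_zero _)
    have hp : (2:ℚ) ^ (2*j+1) ≠ 0 := by positivity
    field_simp
  · rw [acoef_of_odd (by omega), acoef_of_odd (by omega)]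
    norm_num

lemma xpow_eq (m : ℕ) :
    (X : ℚ[X]) ^ m = ∑ k ∈ range (m + 1), C (acoef m k) * Chebyshev.U ℚ k := by
  induction m with
  | zero =>
    simp [acoef, Chebyshev.U_zero]
  | succ m ih =>
    have hXU : ∀ (c : ℚ) (k : ℤ), C c * Chebyshev.U ℚ k * X
        = C (c / 2) * Chebyshev.U ℚ (k + 1) + C (c / 2) * Chebyshev.U ℚ (k - 1) := by
      intro c k
      have h := Chebyshev.U_add_one ℚ k
      have h2 : (C (c/2) * 2 : ℚ[X]) = C c := by
        rw [← map_ofNat (C : ℚ →+* ℚ[X]) 2, ← C_mul]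
        norm_num
      calc C c * Chebyshev.U ℚ k * X = C (c/2) * 2 * Chebyshev.U ℚ k * X := by rw [h2]
        _ = C (c/2) * (2 * X * Chebyshev.U ℚ k) := by ring
        _ = C (c/2) * (Chebyshev.U ℚ (k+1) + Chebyshev.U ℚ (k-1)) := by
            rw [h]; ring
        _ = _ := by ring
    rw [pow_succ, ih, Finset.sum_mul]
    have hsplit : ∀ k ∈ range (m+1), C (acoef m k) * Chebyshev.U ℚ k * X
        = C (acoef m k / 2) * Chebyshev.U ℚ ((k:ℤ) + 1)
          + C (acoef m k / 2) * Chebyshev.U ℚ ((k:ℤ) - 1) := fun k _ => hXU _ _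
    rw [Finset.sum_congr rfl hsplit, Finset.sum_add_distrib]
    have hS1 : ∑ k ∈ range (m+1), C (acoef m k / 2) * Chebyshev.U ℚ ((k:ℤ) + 1)
        = ∑ k ∈ range (m+2),
            C (if k = 0 then 0 else acoef m (k-1) / 2) * Chebyshev.U ℚ k := by
      rw [Finset.sum_range_succ' (fun k => C (if k = 0 then 0 else acoef m (k-1) / 2)
        * Chebyshev.U ℚ k) (m+1)]
      simp only [Nat.succ_ne_zero, if_false, ite_false, ite_true, if_true, Nat.add_sub_cancel,
        map_zero, zero_mul, add_zero]
      apply Finset.sum_congr rfl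
      intro k _
      push_cast
      ring_nf
    have hS2 : ∑ k ∈ range (m+1), C (acoef m k / 2) * Chebyshev.U ℚ ((k:ℤ) - 1)
        = ∑ k ∈ range (m+2), C (acoef m (k+1) / 2) * Chebyshev.U ℚ k := by
      rw [Finset.sum_range_succ' (fun k => C (acoef m k / 2) * Chebyshev.U ℚ ((k:ℤ) - 1)) m]
      rw [Finset.sum_range_succ (fun k => C (acoef m (k+1) / 2) * Chebyshev.U ℚ k) (m+1),
        Finset.sum_range_succ (fun k => C (acoef m (k+1) / 2) * Chebyshev.U ℚ k) m]
      rw [acoef_of_lt (show m < m+1+1 from by omega), acoef_of_lt (show m < m+1 from by omega)]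
      simp only [Nat.cast_zero, zero_sub, Chebyshev.U_neg_one, mul_zero, add_zero, map_zero,
        zero_div, zero_mul]
      apply Finset.sum_congr rfl
      intro k _
      push_cast
      ring_nf
    rw [hS1, hS2, ← Finset.sum_add_distrib]
    apply Finset.sum_congr rfl
    intro k _
    rcases k with _ | k
    · simp only [ite_true, if_true, if_pos rfl, map_zero, zero_mul, zero_add, acoef_rec_zero]
    · rw [if_neg (Nat.succ_ne_zero _), Nat.add_sub_cancel, acoef_rec_succ, ← add_mul, ← C_add]

lemma scalar_id_s8 (n k : ℕ) (hk : k ≤ n) :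
    ∑ i ∈ range (n + 1), _root_.bernoulli (n - i) * (choose n i : ℚ) * acoef i k =
      (n ! : ℚ) * (((k : ℚ) + 1) / 2 ^ k *
        ∑ l ∈ (Finset.range (n - k + 1)).filter (fun l => Even l),
          _root_.bernoulli (n - k - l) /
            (2 ^ l * (n - k - l)! * ((2 * k + l + 2) / 2)! * (l / 2)!)) := by
  rw [Finset.mul_sum, Finset.mul_sum]
  rw [← Finset.sum_filter_of_ne
    (p := fun i => k ≤ i ∧ 2 ∣ (i + k))
    (fun i _ hne => by
      by_contra hP
      rcases Nat.lt_or_ge i k with h | h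
      · exact hne (by rw [acoef_of_lt h]; ring)
      · exact hne (by rw [acoef_of_odd (fun hd => hP ⟨h, hd⟩)]; ring))]
  refine (Finset.sum_nbij' (fun l => k + l) (fun i => i - k) ?_ ?_ ?_ ?_ ?_).symm
  · intro l hl
    simp only [Finset.mem_filter, Finset.mem_range] at hl ⊢
    rcases hl.2 with ⟨t, ht⟩
    exact ⟨by omega, by omega, ⟨k + t, by omega⟩⟩
  · intro i hi
    simp only [Finset.mem_filter, Finset.mem_range] at hi ⊢
    rcases hi.2.2 with ⟨t, ht⟩
    exact ⟨by omega, ⟨(i - k) / 2, by omega⟩⟩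
  · intro l _; omega
  · intro i hi
    simp only [Finset.mem_filter, Finset.mem_range] at hi
    omega
  · intro l hl
    simp only [Finset.mem_filter, Finset.mem_range] at hl
    obtain ⟨j, rfl⟩ : ∃ j, l = 2 * j := by rcases hl.2 with ⟨t, ht⟩; exact ⟨t, by omega⟩
    have hkn : k + 2 * j ≤ n := by omega
    rw [show (2 * k + 2 * j + 2) / 2 = k + j + 1 from by omega,
      show 2 * j / 2 = j from by omega,
      show n - k - 2 * j = n - (k + 2 * j) from by omega,
      acoef_val k j, Nat.cast_choose ℚ hkn]
    have h1 : ((k + 2 * j)! : ℚ) ≠ 0 := Nat.cast_ne_zero.2 (Nat.factorial_ne_zero _)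
    have h2 : ((n - (k + 2 * j))! : ℚ) ≠ 0 := Nat.cast_ne_zero.2 (Nat.factorial_ne_zero _)
    have h3 : ((k + j + 1)! : ℚ) ≠ 0 := Nat.cast_ne_zero.2 (Nat.factorial_ne_zero _)
    have h4 : ((j)! : ℚ) ≠ 0 := Nat.cast_ne_zero.2 (Nat.factorial_ne_zero _)
    have h5 : (2 : ℚ) ^ k ≠ 0 := by positivity
    have h6 : (2 : ℚ) ^ (2 * j) ≠ 0 := by positivity
    have h7 : (2 : ℚ) ^ (k + 2 * j) = 2 ^ k * 2 ^ (2 * j) := by rw [pow_add]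
    field_simp [h7]
    ring

theorem stmt_8 (n : ℕ) :
    Polynomial.bernoulli n =
      C (n ! : ℚ) *
        ∑ k ∈ Finset.range (n + 1),
          C (((k : ℚ) + 1) / 2 ^ k *
              ∑ l ∈ (Finset.range (n - k + 1)).filter (fun l => Even l),
                _root_.bernoulli (n - k - l) /
                  (2 ^ l * (n - k - l)! * ((2 * k + l + 2) / 2)! * (l / 2)!)) *
            Polynomial.Chebyshev.U ℚ k := by
  rw [bernoulli_def]
  have hmon : ∀ i ∈ range (n + 1),
      (monomial i (_root_.bernoulli (n - i) * (choose n i : ℚ)) : ℚ[X]) =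
        ∑ k ∈ range (n + 1),
          C (_root_.bernoulli (n - i) * (choose n i : ℚ) * acoef i k) * Chebyshev.U ℚ k := by
    intro i hi
    simp only [Finset.mem_range] at hi
    rw [← C_mul_X_pow_eq_monomial, xpow_eq i, Finset.mul_sum]
    rw [Finset.sum_subset (Finset.range_subset_range.2 (by omega : i + 1 ≤ n + 1))
      (fun k _ hk => by
        rw [acoef_of_lt (by simp only [Finset.mem_range] at hk ⊢; omega), map_zero,
          zero_mul, mul_zero])]
    exact Finset.sum_congr rfl fun k _ => by rw [← mul_assoc, ← C_mul]
  rw [Finset.sum_congr rfl hmon, Finset.sum_comm, Finset.mul_sum]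
  refine Finset.sum_congr rfl fun k hk => ?_
  rw [← Finset.sum_mul, ← map_sum,
    scalar_id_s8 n k (by simp only [Finset.mem_range] at hk; omega)]
  conv_rhs => rw [← mul_assoc, ← C_mul]
end

section
/- For every nonnegative integer n, H_n(x) = n! ∑_{k=0}^{n} ( (k+1) ∑_{0 ≤ l ≤ n-k, l even} H_{n-k-l} / ((n-k-l)! ((2k+l+2)/2)! (l/2)!) ) U_k(x). -/
open Polynomial Nat

lemma physHermite_succ (n : ℕ) :
    physHermite (n+1) = C 2 * X * physHermite n - derivative (physHermite n) := rfl

lemma deriv_physHermite : ∀ n : ℕ, derivative (physHermite n) = C (2*(n:ℚ)) * physHermite (n-1)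
  | 0 => by simp [physHermite]
  | 1 => by simp [physHermite_succ, physHermite]
  | (n+2) => by
      rw [physHermite_succ, derivative_sub, derivative_mul, derivative_mul,
        deriv_physHermite (n+1)]
      simp only [derivative_C, derivative_X, zero_mul, zero_add, mul_one,
        Nat.add_sub_cancel, derivative_mul, derivative_C]
      rw [show ((n:ℕ)+2) - 1 = n + 1 from rfl, physHermite_succ n]
      push_cast
      rw [show (2*((n:ℚ)+2)) = 2*((n:ℚ)+1) + 2 by ring, C_add,
        show (2*((n:ℚ)+1)) = 2*(n:ℚ) + 2 by ring, C_add]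
      ring

lemma h_rec (i : ℕ) :
    (physHermite (i+2)).eval 0 = -2*((i:ℚ)+1) * (physHermite i).eval 0 := by
  rw [physHermite_succ, deriv_physHermite]
  push_cast
  simp

lemma h_one : (physHermite 1).eval 0 = 0 := by simp [physHermite_succ, physHermite]
lemma h_zero : (physHermite 0).eval 0 = 1 := by simp [physHermite]

/-- the coefficient of `U k` in the expansion of `H n`. -/
noncomputable def a (n k : ℕ) : ℚ :=
  (n ! : ℚ) * (((k : ℚ) + 1) *
    ∑ l ∈ (Finset.range (n - k + 1)).filter (fun l => Even l),
      (physHermite (n - k - l)).eval 0 /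
        ((n - k - l)! * ((2 * k + l + 2) / 2)! * (l / 2)!))

/-- the inner sum, reindexed over `j` with `l = 2j`. -/
noncomputable def s (m k : ℕ) : ℚ :=
  ∑ j ∈ Finset.range (m / 2 + 1),
    (physHermite (m - 2*j)).eval 0 / ((m - 2*j)! * (k + j + 1)! * (j)!)

lemma a_eq (n k : ℕ) : a n k = (n ! : ℚ) * (((k:ℚ) + 1) * s (n - k) k) := by
  rw [a, s]
  congr 2
  refine Finset.sum_nbij' (fun l => l / 2) (fun j => 2 * j) ?_ ?_ ?_ ?_ ?_
  · intro l hl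
    simp only [Finset.mem_filter, Finset.mem_range] at hl ⊢
    omega
  · intro j hj
    simp only [Finset.mem_filter, Finset.mem_range] at hj ⊢
    exact ⟨by omega, even_two_mul j⟩
  · intro l hl
    simp only [Finset.mem_filter, Finset.mem_range] at hl
    obtain ⟨hl1, j, rfl⟩ := hl
    show 2 * ((j + j) / 2) = j + j
    omega
  · intro j _
    show (2 * j) / 2 = j
    omega
  · intro l hl
    simp only [Finset.mem_filter, Finset.mem_range] at hl
    obtain ⟨hl1, j, rfl⟩ := hl
    show _ = eval 0 (physHermite (n - k - 2 * ((j+j)/2))) /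
      (↑(n - k - 2 * ((j+j)/2))! * ↑(k + ((j+j)/2) + 1)! * ↑((j+j)/2)!)
    rw [show (j+j)/2 = j by omega, show n - k - 2*j = n - k - (j+j) by omega,
      show k + j + 1 = (2*k+(j+j)+2)/2 by omega]

lemma s_aux (m k : ℕ) :
    ∑ j ∈ Finset.range (m/2+2), ((m+2-2*j : ℕ) : ℚ) *
        ((physHermite (m+2-2*j)).eval 0 / ((m+2-2*j)! * (k+j+1)! * (j)!))
      = -2 * s m k := by
  rw [Finset.sum_range_succ]
  have hlast : ((m+2-2*(m/2+1) : ℕ) : ℚ) *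
      ((physHermite (m+2-2*(m/2+1))).eval 0 /
        ((m+2-2*(m/2+1))! * (k+(m/2+1)+1)! * (m/2+1)!)) = 0 := by
    rcases Nat.even_or_odd m with he | ho
    · rw [Nat.even_iff] at he
      rw [show m+2-2*(m/2+1) = 0 by omega]
      simp
    · rw [Nat.odd_iff] at ho
      rw [show m+2-2*(m/2+1) = 1 by omega]
      rw [h_one]
      simp
  rw [hlast, add_zero, s, Finset.mul_sum]
  refine Finset.sum_congr rfl fun j hj => ?_
  simp only [Finset.mem_range] at hj
  have h2j : 2*j ≤ m := by omega
  rw [show m + 2 - 2*j = (m - 2*j) + 2 by omega]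
  set i := m - 2*j with hi
  rw [h_rec i, show (i+2)! = (i+2)*((i+1)*(i)!) by rw [Nat.factorial_succ, Nat.factorial_succ]]
  have f1 : ((i)! : ℚ) ≠ 0 := by exact_mod_cast (Nat.factorial_ne_zero i)
  have f2 : ((k+j+1)! : ℚ) ≠ 0 := by exact_mod_cast (Nat.factorial_ne_zero _)
  have f3 : ((j)! : ℚ) ≠ 0 := by exact_mod_cast (Nat.factorial_ne_zero j)
  have f4 : ((i:ℚ)+2) ≠ 0 := by positivity
  have f5 : ((i:ℚ)+1) ≠ 0 := by positivity
  push_cast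
  field_simp

lemma s_rec (m k : ℕ) :
    ((m:ℚ)+(k:ℚ)+2) * ((k:ℚ)+1) * s (m+2) k
      = (k:ℚ) * (∑ j ∈ Finset.range (m/2+2),
          (physHermite (m+2-2*j)).eval 0 / ((m+2-2*j)! * (k+j)! * (j)!))
        + ((k:ℚ)+2) * s m (k+1) - 2*((k:ℚ)+1) * s m k := by
  have h1 : s (m+2) k = ∑ j ∈ Finset.range (m/2+2),
      (physHermite (m+2-2*j)).eval 0 / ((m+2-2*j)! * (k+j+1)! * (j)!) := by
    rw [s, show (m+2)/2+1 = m/2+2 by omega]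
  have hu : ∑ j ∈ Finset.range (m/2+2),
      (physHermite (m+2-2*j)).eval 0 / ((m+2-2*j)! * (k+j)! * (j)!)
    = ∑ j ∈ Finset.range (m/2+2), ((k:ℚ)+j+1) *
      ((physHermite (m+2-2*j)).eval 0 / ((m+2-2*j)! * (k+j+1)! * (j)!)) := by
    refine Finset.sum_congr rfl fun j hj => ?_
    rw [show (k+j+1)! = (k+j+1)*(k+j)! from Nat.factorial_succ _]
    have f1 : ((m+2-2*j)! : ℚ) ≠ 0 := by exact_mod_cast (Nat.factorial_ne_zero _)
    have f2 : ((k+j)! : ℚ) ≠ 0 := by exact_mod_cast (Nat.factorial_ne_zero _)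
    have f3 : ((j)! : ℚ) ≠ 0 := by exact_mod_cast (Nat.factorial_ne_zero j)
    have f4 : ((k:ℚ)+j+1) ≠ 0 := by positivity
    push_cast
    field_simp
  have h2 : s m (k+1) = ∑ j ∈ Finset.range (m/2+2), (j:ℚ) *
      ((physHermite (m+2-2*j)).eval 0 / ((m+2-2*j)! * (k+j+1)! * (j)!)) := by
    rw [Finset.sum_range_succ', s]
    simp only [Nat.cast_zero, zero_mul, Finset.sum_const_zero, add_zero]
    refine Finset.sum_congr rfl fun j hj => ?_
    rw [show m+2-2*(j+1) = m - 2*j by omega, show k+(j+1)+1 = k+1+j+1 by omega,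
      show (j+1)! = (j+1)*(j)! from Nat.factorial_succ j]
    have f1 : ((m-2*j)! : ℚ) ≠ 0 := by exact_mod_cast (Nat.factorial_ne_zero _)
    have f2 : ((k+1+j+1)! : ℚ) ≠ 0 := by exact_mod_cast (Nat.factorial_ne_zero _)
    have f3 : ((j)! : ℚ) ≠ 0 := by exact_mod_cast (Nat.factorial_ne_zero j)
    have f4 : ((j:ℚ)+1) ≠ 0 := by positivity
    push_cast
    field_simp
  have e1 : ((m:ℚ)+(k:ℚ)+2) * ((k:ℚ)+1) * (∑ j ∈ Finset.range (m/2+2),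
        (physHermite (m+2-2*j)).eval 0 / ((m+2-2*j)! * (k+j+1)! * (j)!))
      - (k:ℚ) * (∑ j ∈ Finset.range (m/2+2), ((k:ℚ)+j+1) *
        ((physHermite (m+2-2*j)).eval 0 / ((m+2-2*j)! * (k+j+1)! * (j)!)))
      - ((k:ℚ)+2) * (∑ j ∈ Finset.range (m/2+2), (j:ℚ) *
        ((physHermite (m+2-2*j)).eval 0 / ((m+2-2*j)! * (k+j+1)! * (j)!)))
      = ((k:ℚ)+1) * (∑ j ∈ Finset.range (m/2+2), ((m+2-2*j : ℕ) : ℚ) *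
        ((physHermite (m+2-2*j)).eval 0 / ((m+2-2*j)! * (k+j+1)! * (j)!))) := by
    rw [Finset.mul_sum, Finset.mul_sum, Finset.mul_sum, Finset.mul_sum,
      ← Finset.sum_sub_distrib, ← Finset.sum_sub_distrib]
    refine Finset.sum_congr rfl fun j hj => ?_
    simp only [Finset.mem_range] at hj
    rw [show ((m+2-2*j : ℕ) : ℚ) = (m:ℚ)+2-2*(j:ℚ) by
      have : 2*j ≤ m + 2 := by omega
      push_cast [this]; ring]
    ring
  rw [h1, hu, h2]
  linear_combination e1 + ((k:ℚ)+1) * s_aux m k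

lemma a_self (n : ℕ) : a n n = 1 := by
  rw [a_eq, Nat.sub_self, s]
  rw [show (0:ℕ)/2+1 = 1 from rfl, Finset.sum_range_one]
  norm_num [h_zero]
  rw [Nat.factorial_succ]
  have f1 : ((n)! : ℚ) ≠ 0 := by exact_mod_cast (Nat.factorial_ne_zero _)
  have f4 : ((n:ℚ)+1) ≠ 0 := by positivity
  push_cast
  field_simp

lemma a_succ_self (n : ℕ) : a (n+1) n = 0 := by
  rw [a_eq, show n + 1 - n = 1 by omega, s]
  show _ * (_ * ∑ j ∈ Finset.range (1/2+1), _) = (0:ℚ)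
  rw [show (1:ℕ)/2 + 1 = 1 by omega]
  rw [Finset.sum_range_one]
  norm_num [h_one]

lemma a_rec (n k : ℕ) (hk : k ≤ n) :
    a (n+2) k = (if k = 0 then 0 else a (n+1) (k-1)) + a (n+1) (k+1)
      - 2*((n:ℚ)+1) * a n k := by
  have hfac2 : ((n+2)! : ℚ) = ((n:ℚ)+2) * ((n+1)! : ℚ) := by
    rw [Nat.factorial_succ]; push_cast; ring
  have hfac1 : ((n+1)! : ℚ) = ((n:ℚ)+1) * ((n)! : ℚ) := by
    rw [Nat.factorial_succ]; push_cast; ring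
  obtain rfl | ⟨k', rfl⟩ : k = 0 ∨ ∃ k', k = k' + 1 := by
    rcases k with _ | k'
    · exact Or.inl rfl
    · exact Or.inr ⟨k', rfl⟩
  · -- k = 0
    rw [if_pos rfl, zero_add]
    have e0 : a (n+2) 0 = ((n+2)! : ℚ) * (1 * s (n+2) 0) := by
      rw [a_eq]; norm_num
    have e1 : a (n+1) (0+1) = ((n+1)! : ℚ) * (2 * s n 1) := by
      rw [a_eq]; norm_num
    have e2 : a n 0 = ((n)! : ℚ) * (1 * s n 0) := by
      rw [a_eq]; norm_num
    rw [e0, e1, e2, hfac2, hfac1]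
    have hs := s_rec n 0
    push_cast at hs
    linear_combination ((n:ℚ)+1) * ((n)! : ℚ) * hs
  · -- k = k' + 1
    rw [if_neg (by omega)]
    set m := n - (k' + 1) with hm
    have hmc : ((m : ℕ) : ℚ) = (n:ℚ) - (k':ℚ) - 1 := by
      rw [hm]; push_cast [Nat.cast_sub hk]; ring
    rw [a_eq, a_eq, a_eq, a_eq]
    rw [show (n+2) - (k'+1) = m + 2 by omega, show (n+1) - (k'+1+1) = m by omega,
      show n - (k'+1) = m from rfl, show (k'+1) - 1 = k' from rfl,
      show (n+1) - k' = m + 2 by omega]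
    have hmid : s (m+2) k' = ∑ j ∈ Finset.range (m/2+2),
        (physHermite (m+2-2*j)).eval 0 / ((m+2-2*j)! * ((k'+1)+j)! * (j)!) := by
      rw [s, show (m+2)/2+1 = m/2+2 by omega]
      refine Finset.sum_congr rfl fun j hj => ?_
      rw [show k'+1+j = k'+j+1 by omega]
    have hs := s_rec m (k'+1)
    rw [hmc, ← hmid] at hs
    push_cast at hs
    rw [hfac2, hfac1]
    push_cast
    linear_combination ((n:ℚ)+1) * ((n)! : ℚ) * hs

lemma hC2 : (C (2:ℚ) : ℚ[X]) = 2 := map_ofNat C 2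

lemma hU (k : ℤ) : (2:ℚ[X]) * X * Polynomial.Chebyshev.U ℚ k
    = Polynomial.Chebyshev.U ℚ (k+1) + Polynomial.Chebyshev.U ℚ (k-1) := by
  have h := Polynomial.Chebyshev.U_add_two ℚ (k-1)
  rw [show k-1+2 = k+1 by ring, show k-1+1 = k by ring] at h
  linear_combination -h

lemma key : ∀ n : ℕ, physHermite n
    = ∑ k ∈ Finset.range (n+1), C (a n k) * Polynomial.Chebyshev.U ℚ (k : ℤ)
  | 0 => by
    rw [Finset.sum_range_one]
    simp [a_self, Polynomial.Chebyshev.U_zero, physHermite]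
  | 1 => by
    rw [Finset.sum_range_succ, Finset.sum_range_one, a_self,
      show a 1 0 = 0 from a_succ_self 0]
    simp only [Nat.cast_one, Nat.cast_zero, Polynomial.Chebyshev.U_one, map_one, map_zero,
      zero_mul, one_mul, zero_add]
    rw [physHermite_succ]
    simp [physHermite, hC2]
  | (n+2) => by
    have IH1 := key (n+1)
    have IH0 := key n
    have hG : ∀ k, k < n+3 → a (n+2) k
        = (if k = 0 then 0 else a (n+1) (k-1))
          + (if k ≤ n then a (n+1) (k+1) else 0)
          - (if k ≤ n then 2*((n:ℚ)+1) * a n k else 0) := by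
      intro k hk
      by_cases h : k ≤ n
      · rw [if_pos h, if_pos h, a_rec n k h]
      · have hk2 : k = n+1 ∨ k = n+2 := by omega
        rw [if_neg h, if_neg h]
        rcases hk2 with rfl | rfl
        · rw [if_neg (by omega), show n+1-1 = n from rfl,
            show n+2 = (n+1)+1 from rfl, a_succ_self (n+1), a_succ_self n]
          ring
        · rw [if_neg (by omega), show n+2-1 = n+1 from rfl, a_self, a_self]
          ring
    have hT : ∑ k ∈ Finset.range (n+2+1), C (a (n+2) k) * Polynomial.Chebyshev.U ℚ (k : ℤ)
        = (∑ k ∈ Finset.range (n+3), C (if k = 0 then 0 else a (n+1) (k-1)) * Polynomial.Chebyshev.U ℚ (k : ℤ))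
          + (∑ k ∈ Finset.range (n+3), C (if k ≤ n then a (n+1) (k+1) else 0) * Polynomial.Chebyshev.U ℚ (k : ℤ))
          - (∑ k ∈ Finset.range (n+3), C (if k ≤ n then 2*((n:ℚ)+1) * a n k else 0) * Polynomial.Chebyshev.U ℚ (k : ℤ)) := by
      rw [← Finset.sum_add_distrib, ← Finset.sum_sub_distrib]
      refine Finset.sum_congr rfl fun k hk => ?_
      simp only [Finset.mem_range] at hk
      rw [hG k hk, map_sub, map_add]
      ring
    have E1 : ∑ k ∈ Finset.range (n+3),
          C (if k = 0 then 0 else a (n+1) (k-1)) * Polynomial.Chebyshev.U ℚ (k : ℤ)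
        = ∑ k ∈ Finset.range (n+2), C (a (n+1) k) * Polynomial.Chebyshev.U ℚ ((k : ℤ)+1) := by
      rw [Finset.sum_range_succ']
      rw [if_pos (rfl : (0:ℕ) = 0), map_zero, zero_mul, add_zero]
      refine Finset.sum_congr rfl fun k hk => ?_
      rw [if_neg (Nat.succ_ne_zero k), show k+1-1 = k from rfl, Nat.cast_add, Nat.cast_one]
    have E2 : ∑ k ∈ Finset.range (n+3),
          C (if k ≤ n then a (n+1) (k+1) else 0) * Polynomial.Chebyshev.U ℚ (k : ℤ)
        = ∑ k ∈ Finset.range (n+2), C (a (n+1) k) * Polynomial.Chebyshev.U ℚ ((k : ℤ)-1) := by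
      rw [Finset.sum_range_succ' _ (n+1)]
      have h0 : C (a (n+1) 0) * Polynomial.Chebyshev.U ℚ (((0:ℕ) : ℤ)-1) = 0 := by
        rw [show ((0:ℕ) : ℤ) - 1 = -1 by norm_num, Polynomial.Chebyshev.U_neg_one, mul_zero]
      rw [h0, add_zero]
      rw [← Finset.sum_subset (Finset.range_subset_range.mpr (by omega : n+1 ≤ n+3))
        (fun x _ hx => by
          rw [if_neg (by simp only [Finset.mem_range] at hx ⊢; omega), map_zero, zero_mul])]
      refine Finset.sum_congr rfl fun k hk => ?_
      simp only [Finset.mem_range] at hk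
      rw [if_pos (by omega : k ≤ n), Nat.cast_add, Nat.cast_one, add_sub_cancel_right]
    have E3 : ∑ k ∈ Finset.range (n+3),
          C (if k ≤ n then 2*((n:ℚ)+1) * a n k else 0) * Polynomial.Chebyshev.U ℚ (k : ℤ)
        = C (2*((n+1 : ℕ) : ℚ)) * ∑ k ∈ Finset.range (n+1), C (a n k) * Polynomial.Chebyshev.U ℚ (k : ℤ) := by
      rw [Finset.mul_sum,
        ← Finset.sum_subset (Finset.range_subset_range.mpr (by omega : n+1 ≤ n+3))
        (fun x _ hx => by
          rw [if_neg (by simp only [Finset.mem_range] at hx ⊢; omega), map_zero, zero_mul])]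
      refine Finset.sum_congr rfl fun k hk => ?_
      simp only [Finset.mem_range] at hk
      rw [if_pos (by omega : k ≤ n), show (2*((n:ℚ)+1) * a n k) = (2*((n+1:ℕ):ℚ)) * a n k by push_cast; ring,
        map_mul, mul_assoc]
    have hL1 : C (2:ℚ) * X * (∑ k ∈ Finset.range (n+1+1), C (a (n+1) k) * Polynomial.Chebyshev.U ℚ (k : ℤ))
        = (∑ k ∈ Finset.range (n+2), C (a (n+1) k) * Polynomial.Chebyshev.U ℚ ((k : ℤ)+1))
          + (∑ k ∈ Finset.range (n+2), C (a (n+1) k) * Polynomial.Chebyshev.U ℚ ((k : ℤ)-1)) := by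
      rw [hC2, Finset.mul_sum, ← Finset.sum_add_distrib]
      refine Finset.sum_congr rfl fun k _ => ?_
      linear_combination (C (a (n+1) k)) * hU (k : ℤ)
    rw [physHermite_succ (n+1), deriv_physHermite (n+1), show (n+1)-1 = n from rfl, IH1, IH0,
      hT, E1, E2, E3, ← hL1]

theorem stmt_10 (n : ℕ) :
    physHermite n =
      C (n ! : ℚ) *
        ∑ k ∈ Finset.range (n + 1),
          C (((k : ℚ) + 1) *
              ∑ l ∈ (Finset.range (n - k + 1)).filter (fun l => Even l),
                (physHermite (n - k - l)).eval 0 /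
                  ((n - k - l)! * ((2 * k + l + 2) / 2)! * (l / 2)!)) *
            Polynomial.Chebyshev.U ℚ k := by
  rw [key n, Finset.mul_sum]
  refine Finset.sum_congr rfl fun k _ => ?_
  simp only [a]
  rw [map_mul, mul_assoc]
end

section
/- For every nonnegative integer n and x in (-1,1), T_n(x) = ((-1)^n 2^n n! / (2n)!) √(1-x^2) · d^n/dx^n [ (1-x^2)^{n-1/2} ] (Rodrigues' formula for Chebyshev polynomials of the first kind). -/
open Polynomial Nat Set Filter Topology

noncomputable def Qaux (n : ℕ) : ℕ → ℝ[X]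
  | 0 => 1
  | k + 1 => (1 - X ^ 2) * derivative (Qaux n k) - C (2 * (n:ℝ) - 2 * k - 1) * (X * Qaux n k)

lemma hasDerivAt_poly_rpow (P : ℝ[X]) (a : ℝ) {x : ℝ} (hx : x ∈ Set.Ioo (-1:ℝ) 1) :
    HasDerivAt (fun y : ℝ => P.eval y * (1 - y ^ 2) ^ a)
      ((derivative P).eval x * (1 - x ^ 2) ^ a
        + P.eval x * (a * (1 - x ^ 2) ^ (a - 1) * (-(2 * x)))) x := by
  have hb : (0:ℝ) < 1 - x ^ 2 := by nlinarith [hx.1, hx.2]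
  have h1 : HasDerivAt (fun y : ℝ => 1 - y ^ 2) (-(2 * x)) x := by
    simpa using ((hasDerivAt_pow 2 x).const_sub 1)
  have h2 : HasDerivAt (fun y : ℝ => (1 - y ^ 2) ^ a)
      (a * (1 - x ^ 2) ^ (a - 1) * (-(2 * x))) x :=
    by have := h1.rpow_const (p := a) (Or.inl hb.ne'); convert this using 1; ring
  simpa using (P.hasDerivAt x).fun_mul h2

lemma iteratedDeriv_fr (n : ℕ) : ∀ (k : ℕ) (x : ℝ), x ∈ Set.Ioo (-1:ℝ) 1 →
    iteratedDeriv k (fun y : ℝ => (1 - y ^ 2) ^ ((n : ℝ) - 1 / 2)) x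
      = (Qaux n k).eval x * (1 - x ^ 2) ^ ((n : ℝ) - k - 1 / 2)
  | 0, x, hx => by simp [Qaux]
  | k + 1, x, hx => by
    have hb : (0:ℝ) < 1 - x ^ 2 := by nlinarith [hx.1, hx.2]
    have hev : iteratedDeriv k (fun y : ℝ => (1 - y ^ 2) ^ ((n : ℝ) - 1 / 2))
        =ᶠ[𝓝 x] fun y => (Qaux n k).eval y * (1 - y ^ 2) ^ ((n : ℝ) - k - 1 / 2) := by
      filter_upwards [isOpen_Ioo.mem_nhds hx] with y hy
      exact iteratedDeriv_fr n k y hy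
    rw [iteratedDeriv_succ, hev.deriv_eq,
      (hasDerivAt_poly_rpow (Qaux n k) ((n : ℝ) - k - 1 / 2) hx).deriv]
    have hsplit : (1 - x ^ 2) ^ ((n : ℝ) - k - 1 / 2)
        = (1 - x ^ 2) ^ ((n : ℝ) - k - 1 / 2 - 1) * (1 - x ^ 2) := by
      rw [← Real.rpow_add_one hb.ne']; ring_nf
    have hexp : (n : ℝ) - (k + 1 : ℕ) - 1 / 2 = (n : ℝ) - k - 1 / 2 - 1 := by
      push_cast; ring
    rw [hsplit, hexp]
    simp only [Qaux, eval_sub, eval_mul, eval_one, eval_pow, eval_X, eval_C]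
    ring

lemma hasDerivAt_iteratedDeriv_fr (n k : ℕ) {x : ℝ} (hx : x ∈ Set.Ioo (-1:ℝ) 1) :
    HasDerivAt (iteratedDeriv k (fun y : ℝ => (1 - y ^ 2) ^ ((n : ℝ) - 1 / 2)))
      (iteratedDeriv (k+1) (fun y : ℝ => (1 - y ^ 2) ^ ((n : ℝ) - 1 / 2)) x) x := by
  have hev : iteratedDeriv k (fun y : ℝ => (1 - y ^ 2) ^ ((n : ℝ) - 1 / 2))
      =ᶠ[𝓝 x] (fun y : ℝ => (Qaux n k).eval y * (1 - y ^ 2) ^ ((n : ℝ) - k - 1 / 2)) := by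
    filter_upwards [isOpen_Ioo.mem_nhds hx] with y hy
    exact iteratedDeriv_fr n k y hy
  have h := (hasDerivAt_poly_rpow (Qaux n k) ((n : ℝ) - k - 1 / 2) hx).congr_of_eventuallyEq hev
  have hd : iteratedDeriv (k+1) (fun y : ℝ => (1 - y ^ 2) ^ ((n : ℝ) - 1 / 2)) x
      = deriv (iteratedDeriv k (fun y : ℝ => (1 - y ^ 2) ^ ((n : ℝ) - 1 / 2))) x :=
by rw [iteratedDeriv_succ]
  rw [hd, h.deriv]; exact h

lemma iteratedDeriv_X_mul (n : ℕ) : ∀ (k : ℕ) (x : ℝ), x ∈ Set.Ioo (-1:ℝ) 1 →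
    iteratedDeriv (k+1) (fun y : ℝ => y * (1 - y ^ 2) ^ ((n : ℝ) - 1 / 2)) x
      = x * iteratedDeriv (k+1) (fun y : ℝ => (1 - y ^ 2) ^ ((n : ℝ) - 1 / 2)) x
        + ((k : ℝ) + 1) * iteratedDeriv k (fun y : ℝ => (1 - y ^ 2) ^ ((n : ℝ) - 1 / 2)) x
  | 0, x, hx => by
    have h0 : HasDerivAt (fun y : ℝ => (1 - y ^ 2) ^ ((n : ℝ) - 1 / 2))
        (iteratedDeriv 1 (fun y : ℝ => (1 - y ^ 2) ^ ((n : ℝ) - 1 / 2)) x) x := by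
      have := hasDerivAt_iteratedDeriv_fr n 0 hx
      rwa [iteratedDeriv_zero] at this
    have h := (hasDerivAt_id x).fun_mul h0
    simp only [id_eq] at h
    rw [iteratedDeriv_one, h.deriv, iteratedDeriv_zero]
    simp; ring
  | k + 1, x, hx => by
    have hev : iteratedDeriv (k+1) (fun y : ℝ => y * (1 - y ^ 2) ^ ((n : ℝ) - 1 / 2))
        =ᶠ[𝓝 x] fun z : ℝ =>
          z * iteratedDeriv (k+1) (fun y : ℝ => (1 - y ^ 2) ^ ((n : ℝ) - 1 / 2)) z
          + ((k : ℝ) + 1) * iteratedDeriv k (fun y : ℝ => (1 - y ^ 2) ^ ((n : ℝ) - 1 / 2)) z := by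
      filter_upwards [isOpen_Ioo.mem_nhds hx] with y hy
      exact iteratedDeriv_X_mul n k y hy
    have h : HasDerivAt (fun z : ℝ =>
          z * iteratedDeriv (k+1) (fun y : ℝ => (1 - y ^ 2) ^ ((n : ℝ) - 1 / 2)) z
          + ((k : ℝ) + 1) * iteratedDeriv k (fun y : ℝ => (1 - y ^ 2) ^ ((n : ℝ) - 1 / 2)) z)
        (1 * iteratedDeriv (k+1) (fun y : ℝ => (1 - y ^ 2) ^ ((n : ℝ) - 1 / 2)) x
          + x * iteratedDeriv (k+2) (fun y : ℝ => (1 - y ^ 2) ^ ((n : ℝ) - 1 / 2)) x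
          + ((k : ℝ) + 1) * iteratedDeriv (k+1) (fun y : ℝ => (1 - y ^ 2) ^ ((n : ℝ) - 1 / 2)) x) x :=
      by
        have := ((hasDerivAt_id x).fun_mul (hasDerivAt_iteratedDeriv_fr n (k+1) hx)).fun_add
          ((hasDerivAt_iteratedDeriv_fr n k hx).const_mul ((k : ℝ) + 1))
        simpa [id_eq] using this
    rw [iteratedDeriv_succ, hev.deriv_eq, h.deriv]
    push_cast; ring

lemma iteratedDeriv_cmul (c : ℝ) (g : ℝ → ℝ) : ∀ (n : ℕ),
    iteratedDeriv n (fun y => c * g y) = fun x => c * iteratedDeriv n g x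
  | 0 => by ext x; simp
  | n + 1 => by
    ext x
    rw [iteratedDeriv_succ, iteratedDeriv_cmul c g n, iteratedDeriv_succ,
      ← deriv_const_mul_field c]

noncomputable def cR (n : ℕ) : ℝ := (-1)^n * (2*n)! / (2^n * n !)

lemma cR_succ (n : ℕ) : cR (n+1) = -(2*(n:ℝ)+1) * cR n := by
  have e1 : (2*(n+1))! = (2*n+2) * (2*n+1)! := by
    rw [show 2*(n+1) = (2*n+1)+1 from by ring, Nat.factorial_succ]
  have e2 : (2*n+1)! = (2*n+1) * (2*n)! := Nat.factorial_succ _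
  have e3 : (n+1)! = (n+1) * n ! := Nat.factorial_succ _
  have h2 : ((2:ℝ)^n : ℝ) ≠ 0 := by positivity
  have h3 : ((n ! : ℝ)) ≠ 0 := by exact_mod_cast (Nat.factorial_pos n).ne'
  have h4 : (((2*n)! : ℝ)) ≠ 0 := by exact_mod_cast (Nat.factorial_pos (2*n)).ne'
  rw [cR, cR, e1, e2, e3]
  push_cast
  field_simp
  ring

lemma hasDerivAt_U_sqrt (n : ℕ) {x : ℝ} (hx : x ∈ Set.Ioo (-1:ℝ) 1) :
    HasDerivAt (fun z : ℝ => (Chebyshev.U ℝ ((n:ℤ)-1)).eval z * (1 - z^2) ^ ((1:ℝ)/2))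
      (-(n:ℝ) * (Chebyshev.T ℝ (n:ℤ)).eval x * (1 - x^2) ^ (-(1:ℝ)/2)) x := by
  have hb : (0:ℝ) < 1 - x ^ 2 := by nlinarith [hx.1, hx.2]
  have h := hasDerivAt_poly_rpow (Chebyshev.U ℝ ((n:ℤ)-1)) ((1:ℝ)/2) hx
  have hpoly := Chebyshev.add_one_mul_T_eq_poly_in_U (R := ℝ) ((n:ℤ)-1)
  have hidx : ((n:ℤ) - 1 + 1) = (n:ℤ) := by ring
  rw [hidx] at hpoly
  have he := congrArg (eval x) hpoly
  simp only [eval_mul, eval_add, eval_sub, eval_one, eval_X, eval_pow, eval_intCast] at he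
  push_cast at he
  convert h using 1
  have hhalf : (1 - x^2) ^ ((1:ℝ)/2) = (1 - x^2) * (1 - x^2) ^ (-(1:ℝ)/2) := by
    rw [show ((1:ℝ)/2) = 1 + (-(1)/2) by norm_num, Real.rpow_add hb, Real.rpow_one]
  have hexp : ((1:ℝ)/2 - 1) = -(1:ℝ)/2 := by norm_num
  rw [hexp, hhalf]
  linear_combination (-(1 - x^2) ^ (-(1:ℝ)/2)) * he

lemma keyB (n : ℕ) (hn : 1 ≤ n)
    (ih : ∀ x ∈ Set.Ioo (-1:ℝ) 1,
      iteratedDeriv n (fun y : ℝ => (1 - y ^ 2) ^ ((n : ℝ) - 1 / 2)) x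
        = cR n * (Chebyshev.T ℝ (n:ℤ)).eval x * (1 - x^2) ^ (-(1:ℝ)/2)) :
    ∀ x ∈ Set.Ioo (-1:ℝ) 1,
      iteratedDeriv (n-1) (fun y : ℝ => (1 - y ^ 2) ^ ((n : ℝ) - 1 / 2)) x
        = -(cR n / n) * ((Chebyshev.U ℝ ((n:ℤ)-1)).eval x * (1 - x^2) ^ ((1:ℝ)/2)) := by
  have hn0 : ((n:ℝ)) ≠ 0 := by exact_mod_cast (Nat.pos_of_ne_zero (by omega)).ne'
  set H : ℝ → ℝ := fun y => iteratedDeriv (n-1) (fun z : ℝ => (1 - z ^ 2) ^ ((n : ℝ) - 1 / 2)) y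
    + (cR n / n) * ((Chebyshev.U ℝ ((n:ℤ)-1)).eval y * (1 - y^2) ^ ((1:ℝ)/2)) with hHdef
  have hH : ∀ y ∈ Set.Ioo (-1:ℝ) 1, HasDerivAt H 0 y := by
    intro y hy
    have h1 : HasDerivAt (iteratedDeriv (n-1) (fun z : ℝ => (1 - z ^ 2) ^ ((n : ℝ) - 1 / 2)))
        (iteratedDeriv n (fun z : ℝ => (1 - z ^ 2) ^ ((n : ℝ) - 1 / 2)) y) y := by
      have := hasDerivAt_iteratedDeriv_fr n (n-1) hy
      rwa [Nat.sub_add_cancel hn] at this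
    have h2 := (hasDerivAt_U_sqrt n hy).const_mul (cR n / n)
    have h := h1.fun_add h2
    refine h.congr_deriv ?_
    rw [ih y hy]
    field_simp
    ring
  have hconst : ∀ x ∈ Set.Ioo (-1:ℝ) 1, ∀ y ∈ Set.Ioo (-1:ℝ) 1, H x = H y := by
    intro x hx y hy
    refine (convex_Ioo (-1:ℝ) 1).is_const_of_fderivWithin_eq_zero
      (fun z hz => ((hH z hz).differentiableAt).differentiableWithinAt) ?_ hx hy
    intro z hz
    rw [fderivWithin_of_isOpen isOpen_Ioo hz, (hH z hz).hasFDerivAt.fderiv]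
    ext; simp
  -- identify the constant as 0 using the limit at 1
  set G : ℝ → ℝ := fun y => (Qaux n (n-1)).eval y * Real.sqrt (1-y^2)
    + (cR n / n) * ((Chebyshev.U ℝ ((n:ℤ)-1)).eval y * Real.sqrt (1-y^2)) with hGdef
  have hHG : ∀ y ∈ Set.Ioo (-1:ℝ) 1, H y = G y := by
    intro y hy
    have hb : (0:ℝ) < 1 - y ^ 2 := by nlinarith [hy.1, hy.2]
    have hcast : (n : ℝ) - ((n-1 : ℕ) : ℝ) - 1/2 = 1/2 := by
      rw [Nat.cast_sub hn]; push_cast; ring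
    rw [hHdef]
    simp only [hGdef]
    rw [iteratedDeriv_fr n (n-1) y hy, hcast, Real.sqrt_eq_rpow]
  have hGcont : Continuous G := by
    apply Continuous.add
    · exact (Polynomial.continuous _).mul ((continuous_const.sub (continuous_pow 2)).sqrt)
    · exact continuous_const.mul ((Polynomial.continuous _).mul
        ((continuous_const.sub (continuous_pow 2)).sqrt))
  have hG1 : G 1 = 0 := by simp [hGdef]
  have hx0 : (0:ℝ) ∈ Set.Ioo (-1:ℝ) 1 := by norm_num
  haveI := right_nhdsWithin_Ioo_neBot (show (-1:ℝ) < 1 by norm_num)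
  have hev1 : H =ᶠ[𝓝[Set.Ioo (-1:ℝ) 1] 1] G := by
    filter_upwards [eventually_mem_nhdsWithin] with y hy using hHG y hy
  have hev2 : H =ᶠ[𝓝[Set.Ioo (-1:ℝ) 1] 1] (fun _ => H 0) := by
    filter_upwards [eventually_mem_nhdsWithin] with y hy using hconst y hy 0 hx0
  have ht1 : Tendsto H (𝓝[Set.Ioo (-1:ℝ) 1] 1) (𝓝 0) := by
    rw [tendsto_congr' hev1]
    simpa [hG1] using (hGcont.tendsto 1).mono_left nhdsWithin_le_nhds
  have ht2 : Tendsto H (𝓝[Set.Ioo (-1:ℝ) 1] 1) (𝓝 (H 0)) := by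
    rw [tendsto_congr' hev2]
    exact tendsto_const_nhds
  have hH0 : H 0 = 0 := tendsto_nhds_unique ht2 ht1
  intro x hx
  have hx0' : H x = 0 := by rw [hconst x hx 0 hx0, hH0]
  rw [hHdef] at hx0'
  simp only at hx0'
  linear_combination hx0'

lemma keyA : ∀ (n : ℕ), ∀ x ∈ Set.Ioo (-1:ℝ) 1,
    iteratedDeriv n (fun y : ℝ => (1 - y ^ 2) ^ ((n : ℝ) - 1 / 2)) x
      = cR n * (Chebyshev.T ℝ (n:ℤ)).eval x * (1 - x ^ 2) ^ (-(1:ℝ)/2) := by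
  intro n
  induction n with
  | zero =>
    intro x hx
    rw [iteratedDeriv_zero]
    norm_num [cR]
  | succ n ih =>
    intro x hx
    have hb : (0:ℝ) < 1 - x ^ 2 := by nlinarith [hx.1, hx.2]
    -- the derivative of the (n+1)-st function
    have hder : ∀ y ∈ Set.Ioo (-1:ℝ) 1,
        deriv (fun z : ℝ => (1 - z ^ 2) ^ (((n:ℕ)+1 : ℝ) - 1 / 2)) y
          = (-(2*(n:ℝ)+1)) * (y * (1 - y^2) ^ ((n:ℝ) - 1/2)) := by
      intro y hy
      have h := hasDerivAt_poly_rpow 1 (((n:ℝ)+1) - 1/2) hy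
      simp only [eval_one, one_mul, derivative_one, eval_zero, zero_mul, zero_add] at h
      rw [show ((n:ℝ)+1) - 1/2 - 1 = (n:ℝ) - 1/2 from by ring] at h
      rw [h.deriv]
      ring
    have hev : deriv (fun z : ℝ => (1 - z ^ 2) ^ (((n:ℕ)+1 : ℝ) - 1 / 2))
        =ᶠ[𝓝 x] fun y => (-(2*(n:ℝ)+1)) * (y * (1 - y^2) ^ ((n:ℝ) - 1/2)) := by
      filter_upwards [isOpen_Ioo.mem_nhds hx] with y hy using hder y hy
    have hstep : iteratedDeriv (n+1) (fun z : ℝ => (1 - z ^ 2) ^ (((n:ℕ)+1 : ℝ) - 1 / 2)) x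
        = (-(2*(n:ℝ)+1)) * iteratedDeriv n (fun y : ℝ => y * (1 - y^2) ^ ((n:ℝ) - 1/2)) x := by
      rw [iteratedDeriv_succ', hev.iteratedDeriv_eq n,
        iteratedDeriv_cmul (-(2*(n:ℝ)+1)) (fun y : ℝ => y * (1 - y^2) ^ ((n:ℝ) - 1/2)) n]
    rcases Nat.eq_zero_or_pos n with hn | hn
    · subst hn
      have h : HasDerivAt (fun y : ℝ => (1 - y ^ 2) ^ (((0+1 : ℕ) : ℝ) - 1 / 2))
          (cR 1 * (Chebyshev.T ℝ ((0+1 : ℕ) : ℤ)).eval x * (1 - x ^ 2) ^ (-(1:ℝ)/2)) x := by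
        have h := hasDerivAt_poly_rpow 1 (((0+1 : ℕ) : ℝ) - 1 / 2) hx
        simp only [eval_one, one_mul, derivative_one, eval_zero, zero_mul, zero_add] at h
        rw [show (((0+1 : ℕ) : ℝ) - 1/2 - 1) = -(1:ℝ)/2 from by norm_num] at h
        convert h using 1
        have hc : cR 1 = -1 := by norm_num [cR]
        have hT : (Chebyshev.T ℝ ((0+1 : ℕ) : ℤ)).eval x = x := by
          norm_num [Chebyshev.T_one]
        rw [hc, hT]
        ring
      rw [iteratedDeriv_one, h.deriv]
    · -- n ≥ 1
      have hB := keyB n hn ih x hx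
      have hmul := iteratedDeriv_X_mul n (n-1) x hx
      rw [Nat.sub_add_cancel hn] at hmul
      have hcast : ((n-1 : ℕ) : ℝ) + 1 = (n : ℝ) := by
        rw [Nat.cast_sub hn]; push_cast; ring
      rw [hcast] at hmul
      push_cast
      rw [hstep, hmul, ih x hx, hB]
      have hhalf : (1 - x^2) ^ ((1:ℝ)/2) = (1 - x^2) * (1 - x^2) ^ (-(1:ℝ)/2) := by
        rw [show ((1:ℝ)/2) = 1 + (-(1)/2) by norm_num, Real.rpow_add hb, Real.rpow_one]
      have hT : (Chebyshev.T ℝ ((n:ℤ)+1)).eval x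
          = x * (Chebyshev.T ℝ (n:ℤ)).eval x - (1-x^2) * (Chebyshev.U ℝ ((n:ℤ)-1)).eval x := by
        have hpoly := Chebyshev.T_eq_X_mul_T_sub_pol_U ℝ ((n:ℤ)-1)
        rw [show (n:ℤ)-1+2 = (n:ℤ)+1 from by ring, show (n:ℤ)-1+1 = (n:ℤ) from by ring] at hpoly
        have := congrArg (eval x) hpoly
        simpa using this
      have hn0 : ((n:ℝ)) ≠ 0 := by exact_mod_cast hn.ne'
      rw [cR_succ n]
      push_cast
      rw [hT, hhalf]
      field_simp
      ring

theorem stmt_13 (n : ℕ) (x : ℝ) (hx : x ∈ Set.Ioo (-1:ℝ) 1) :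
    (Chebyshev.T ℝ n).eval x =
      ((-1 : ℝ) ^ n * 2 ^ n * n ! / (2 * n)!) * Real.sqrt (1 - x ^ 2) *
        iteratedDeriv n (fun y : ℝ => (1 - y ^ 2) ^ ((n : ℝ) - 1 / 2)) x := by
  have hb : (0:ℝ) < 1 - x ^ 2 := by nlinarith [hx.1, hx.2]
  rw [keyA n x hx]
  have hsqrt : Real.sqrt (1 - x ^ 2) * (1 - x ^ 2) ^ (-(1:ℝ)/2) = 1 := by
    rw [Real.sqrt_eq_rpow, ← Real.rpow_add hb]
    norm_num
  have h2 : ((2:ℝ)^n : ℝ) ≠ 0 := by positivity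
  have h3 : ((n ! : ℝ)) ≠ 0 := by exact_mod_cast (Nat.factorial_pos n).ne'
  have h4 : (((2*n)! : ℝ)) ≠ 0 := by exact_mod_cast (Nat.factorial_pos (2*n)).ne'
  have hsq : ((-1:ℝ)^n) * ((-1:ℝ)^n) = 1 := by
    rw [← pow_add]
    exact Even.neg_one_pow ⟨n, rfl⟩
  rw [cR]
  field_simp
  rw [show (-(1:ℝ)/2) = -(1/2) by ring] at hsqrt
  linear_combination
    (-((Chebyshev.T ℝ (n:ℤ)).eval x)
      * Real.sqrt (1 - x ^ 2) * (1 - x ^ 2) ^ (-((1:ℝ)/2))) * hsq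
    + (-((Chebyshev.T ℝ (n:ℤ)).eval x)) * hsqrt
end

section
/- For every nonnegative integer n and x in (-1,1), U_n(x) = ((-1)^n 2^n (n+1)! / (2n+1)!) (1-x^2)^{-1/2} · d^n/dx^n [ (1-x^2)^{n+1/2} ] (Rodrigues' formula for Chebyshev polynomials of the second kind). -/
open Polynomial Nat

open Set Filter Real Topology

section RodriguesU

noncomputable def rodF (n : ℕ) : ℝ → ℝ := fun y : ℝ => (1 - y ^ 2) ^ ((n : ℝ) + 1 / 2)

noncomputable def rodC (n : ℕ) : ℝ := (-1)^n * (2*n+1)! / (2^n * (n+1)!)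

lemma rod_pos {x : ℝ} (hx : x ∈ Set.Ioo (-1:ℝ) 1) : 0 < 1 - x ^ 2 := by
  obtain ⟨h1, h2⟩ := hx; nlinarith

lemma rod_hasDerivAt_rpow (α : ℝ) {x : ℝ} (hx : x ∈ Set.Ioo (-1:ℝ) 1) :
    HasDerivAt (fun y : ℝ => (1 - y ^ 2) ^ α) (-(2*x) * α * (1 - x ^ 2) ^ (α - 1)) x := by
  have h : HasDerivAt (fun y : ℝ => 1 - y ^ 2) (-(2*x)) x := by
    simpa using ((hasDerivAt_pow 2 x).const_sub 1)
  have := h.rpow_const (p := α) (Or.inl (ne_of_gt (rod_pos hx)))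
  convert this using 1

lemma rod_structural (n k : ℕ) : ∃ Q : Polynomial ℝ, ∀ x ∈ Set.Ioo (-1:ℝ) 1,
    iteratedDeriv k (rodF n) x = Q.eval x * (1 - x ^ 2) ^ ((n : ℝ) - k + 1 / 2) := by
  induction k with
  | zero =>
    refine ⟨1, fun x hx => ?_⟩
    simp [rodF, iteratedDeriv_zero]
  | succ k ih =>
    obtain ⟨Q, hQ⟩ := ih
    refine ⟨(1 - X ^ 2) * derivative Q - C (2 * ((n:ℝ) - k) + 1) * X * Q, fun x hx => ?_⟩
    have hopen : Set.Ioo (-1:ℝ) 1 ∈ 𝓝 x := isOpen_Ioo.mem_nhds hx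
    have hev : iteratedDeriv k (rodF n) =ᶠ[𝓝 x]
        fun y => Q.eval y * (1 - y ^ 2) ^ ((n : ℝ) - k + 1 / 2) :=
      eventually_of_mem hopen (fun y hy => hQ y hy)
    have hder : HasDerivAt (fun y => Q.eval y * (1 - y ^ 2) ^ ((n : ℝ) - k + 1 / 2))
        ((derivative Q).eval x * (1 - x ^ 2) ^ ((n : ℝ) - k + 1 / 2)
          + Q.eval x * (-(2*x) * ((n:ℝ) - k + 1/2) * (1 - x ^ 2) ^ ((n : ℝ) - k + 1/2 - 1))) x :=
      (Q.hasDerivAt x).mul (rod_hasDerivAt_rpow _ hx)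
    rw [iteratedDeriv_succ, hev.deriv_eq, hder.deriv]
    have hp := rod_pos hx
    have e1 : ((n : ℝ) - k + 1 / 2) = ((n : ℝ) - (k+1) + 1/2) + 1 := by push_cast; ring
    have e2 : ((n : ℝ) - k + 1 / 2 - 1) = ((n : ℝ) - (k+1) + 1/2) := by push_cast; ring
    rw [e2, e1, Real.rpow_add hp, Real.rpow_one]
    simp only [eval_sub, eval_mul, eval_one, eval_pow, eval_X, eval_C, eval_add]
    push_cast
    ring

lemma rod_iter_hasDeriv (n k : ℕ) {x : ℝ} (hx : x ∈ Set.Ioo (-1:ℝ) 1) :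
    HasDerivAt (iteratedDeriv k (rodF n)) (iteratedDeriv (k+1) (rodF n) x) x := by
  obtain ⟨Q, hQ⟩ := rod_structural n k
  have hopen : Set.Ioo (-1:ℝ) 1 ∈ 𝓝 x := isOpen_Ioo.mem_nhds hx
  have hder : HasDerivAt (fun y => Q.eval y * (1 - y ^ 2) ^ ((n : ℝ) - k + 1 / 2))
      ((derivative Q).eval x * (1 - x ^ 2) ^ ((n : ℝ) - k + 1 / 2)
        + Q.eval x * (-(2*x) * ((n:ℝ) - k + 1/2) * (1 - x ^ 2) ^ ((n : ℝ) - k + 1/2 - 1))) x :=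
    (Q.hasDerivAt x).mul (rod_hasDerivAt_rpow _ hx)
  have hev : (fun y => Q.eval y * (1 - y ^ 2) ^ ((n : ℝ) - k + 1 / 2)) =ᶠ[𝓝 x]
      iteratedDeriv k (rodF n) :=
    eventually_of_mem hopen (fun y hy => (hQ y hy).symm)
  have h2 := hder.congr_of_eventuallyEq hev.symm
  rw [iteratedDeriv_succ, h2.deriv]
  exact h2

lemma rod_congr_iter {g₁ g₂ : ℝ → ℝ} (h : ∀ y ∈ Set.Ioo (-1:ℝ) 1, g₁ y = g₂ y) (k : ℕ) :
    ∀ x ∈ Set.Ioo (-1:ℝ) 1, iteratedDeriv k g₁ x = iteratedDeriv k g₂ x := by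
  induction k with
  | zero => simpa using h
  | succ k ih =>
    intro x hx
    have hev : iteratedDeriv k g₁ =ᶠ[𝓝 x] iteratedDeriv k g₂ :=
      eventually_of_mem (isOpen_Ioo.mem_nhds hx) ih
    rw [iteratedDeriv_succ, iteratedDeriv_succ, hev.deriv_eq]

lemma rod_leibniz (m : ℕ) (c : ℝ) (k : ℕ) :
    ∀ x ∈ Set.Ioo (-1:ℝ) 1, iteratedDeriv (k+1) (fun y => c * (y * rodF m y)) x
      = c * (x * iteratedDeriv (k+1) (rodF m) x + (k+1) * iteratedDeriv k (rodF m) x) := by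
  induction k with
  | zero =>
    intro x hx
    have h0 : HasDerivAt (rodF m) (iteratedDeriv 1 (rodF m) x) x := by
      simpa [iteratedDeriv_zero] using rod_iter_hasDeriv m 0 hx
    have h : HasDerivAt (fun y => c * (y * rodF m y))
        (c * (1 * rodF m x + x * iteratedDeriv 1 (rodF m) x)) x :=
      ((hasDerivAt_id x).mul h0).const_mul c
    rw [iteratedDeriv_one, h.deriv]
    rw [iteratedDeriv_zero]
    ring
  | succ k ih =>
    intro x hx
    have hev : iteratedDeriv (k+1) (fun y => c * (y * rodF m y)) =ᶠ[𝓝 x]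
        fun y => c * (y * iteratedDeriv (k+1) (rodF m) y + (k+1) * iteratedDeriv k (rodF m) y) :=
      eventually_of_mem (isOpen_Ioo.mem_nhds hx) ih
    have hder : HasDerivAt
        (fun y => c * (y * iteratedDeriv (k+1) (rodF m) y + (k+1) * iteratedDeriv k (rodF m) y))
        (c * ((1 * iteratedDeriv (k+1) (rodF m) x + x * iteratedDeriv (k+2) (rodF m) x)
          + (k+1) * iteratedDeriv (k+1) (rodF m) x)) x := by
      exact (((hasDerivAt_id x).mul (rod_iter_hasDeriv m (k+1) hx)).add
        ((rod_iter_hasDeriv m k hx).const_mul ((k:ℝ)+1))).const_mul c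
    rw [iteratedDeriv_succ, hev.deriv_eq, hder.deriv]
    push_cast
    ring

lemma rod_first_deriv (n : ℕ) {x : ℝ} (hx : x ∈ Set.Ioo (-1:ℝ) 1) :
    deriv (rodF (n+1)) x = (-(2*(n:ℝ)+3)) * (x * rodF n x) := by
  have h := rod_hasDerivAt_rpow (((n+1 : ℕ) : ℝ) + 1/2) hx
  have e : (((n+1 : ℕ) : ℝ) + 1/2 - 1) = ((n:ℝ) + 1/2) := by push_cast; ring
  rw [e] at h
  have : deriv (rodF (n+1)) x = -(2*x) * (((n+1:ℕ):ℝ) + 1/2) * (1 - x^2) ^ ((n:ℝ) + 1/2) := h.deriv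
  rw [this]
  unfold rodF
  push_cast
  ring

lemma rod_lemC (n : ℕ) {x : ℝ} (hx : x ∈ Set.Ioo (-1:ℝ) 1) :
    iteratedDeriv (n+2) (rodF (n+1)) x
      = (-(2*(n:ℝ)+3)) * (x * iteratedDeriv (n+1) (rodF n) x
          + ((n:ℝ)+1) * iteratedDeriv n (rodF n) x) := by
  have h1 : ∀ y ∈ Set.Ioo (-1:ℝ) 1,
      deriv (rodF (n+1)) y = (fun y => (-(2*(n:ℝ)+3)) * (y * rodF n y)) y :=
    fun y hy => rod_first_deriv n hy
  have h2 := rod_congr_iter h1 (n+1) x hx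
  rw [iteratedDeriv_succ', h2, rod_leibniz n (-(2*(n:ℝ)+3)) n x hx]

lemma rod_lemP (n : ℤ) :
    ((n : ℝ[X]) + 1) * (-X * Chebyshev.U ℝ (n+1) + (1 - X^2) * derivative (Chebyshev.U ℝ (n+1)))
      = ((n : ℝ[X]) + 2) * (-(X^2) * Chebyshev.U ℝ n
          + X * ((1 - X^2) * derivative (Chebyshev.U ℝ n))
          + ((n : ℝ[X]) + 1) * (1 - X^2) * Chebyshev.U ℝ n) := by
  have h1 := Chebyshev.add_one_mul_T_eq_poly_in_U (R := ℝ) n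
  have h2 := Chebyshev.add_one_mul_T_eq_poly_in_U (R := ℝ) (n+1)
  have h3 := Chebyshev.T_eq_X_mul_T_sub_pol_U ℝ n
  push_cast at h1 h2 h3 ⊢
  linear_combination (norm := ring_nf)
    (-((n:ℝ[X])+2) * X) * h1 + ((n:ℝ[X])+1) * h2
      + (-((n:ℝ[X])+1) * ((n:ℝ[X])+2)) * h3

lemma rodC_succ (n : ℕ) : rodC (n+1) * ((n:ℝ)+2) = -(2*(n:ℝ)+3) * ((n:ℝ)+1) * rodC n := by
  unfold rodC
  have e1 : 2*(n+1)+1 = (2*n+1)+1+1 := by ring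
  rw [e1, Nat.factorial_succ ((2*n+1)+1), Nat.factorial_succ (2*n+1),
    Nat.factorial_succ (n+1)]
  have h1 : ((2*n+1)! : ℝ) ≠ 0 := Nat.cast_ne_zero.mpr (Nat.factorial_ne_zero _)
  have h2 : ((n+1)! : ℝ) ≠ 0 := Nat.cast_ne_zero.mpr (Nat.factorial_ne_zero _)
  have h3 : (2:ℝ)^n ≠ 0 := by positivity
  push_cast
  field_simp
  ring

lemma rod_hasDerivAt_S (m : ℤ) {x : ℝ} (hx : x ∈ Set.Ioo (-1:ℝ) 1) :
    HasDerivAt (fun y : ℝ => (1 - y^2) ^ ((1:ℝ)/2) * (Chebyshev.U ℝ m).eval y)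
      ((1 - x^2) ^ (-(1:ℝ)/2) * (-x * (Chebyshev.U ℝ m).eval x
        + (1 - x^2) * (derivative (Chebyshev.U ℝ m)).eval x)) x := by
  have hp := rod_pos hx
  have h := (rod_hasDerivAt_rpow ((1:ℝ)/2) hx).mul ((Chebyshev.U ℝ m).hasDerivAt x)
  have e : (1:ℝ)/2 - 1 = -(1:ℝ)/2 := by norm_num
  have e2 : (1 - x^2) ^ ((1:ℝ)/2) = (1 - x^2) ^ (-(1:ℝ)/2) * (1 - x^2) := by
    rw [show (1:ℝ)/2 = -(1:ℝ)/2 + 1 by norm_num, Real.rpow_add_one (ne_of_gt hp)]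
  rw [e] at h
  exact h.congr_deriv (by rw [e2]; ring)

lemma rod_sq {x : ℝ} (hx : x ∈ Set.Ioo (-1:ℝ) 1) :
    (1 - x^2) ^ ((1:ℝ)/2) = (1 - x^2) ^ (-(1:ℝ)/2) * (1 - x^2) := by
  rw [show (1:ℝ)/2 = -(1:ℝ)/2 + 1 by norm_num, Real.rpow_add_one (ne_of_gt (rod_pos hx))]

lemma rod_main (n : ℕ) : ∀ x ∈ Set.Ioo (-1:ℝ) 1,
    iteratedDeriv n (rodF n) x
      = rodC n * ((1 - x^2) ^ ((1:ℝ)/2) * (Chebyshev.U ℝ (n:ℤ)).eval x) := by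
  induction n with
  | zero =>
    intro x hx
    simp [rodF, rodC, iteratedDeriv_zero, Chebyshev.U_zero]
  | succ n ih =>
    have hd1 : ∀ y ∈ Set.Ioo (-1:ℝ) 1, iteratedDeriv (n+1) (rodF n) y
        = rodC n * ((1 - y^2) ^ (-(1:ℝ)/2) * (-y * (Chebyshev.U ℝ (n:ℤ)).eval y
            + (1 - y^2) * (derivative (Chebyshev.U ℝ (n:ℤ))).eval y)) := by
      intro y hy
      have hS := (rod_hasDerivAt_S (n:ℤ) hy).const_mul (rodC n)
      have hev : (fun z : ℝ => rodC n * ((1 - z^2) ^ ((1:ℝ)/2) * (Chebyshev.U ℝ (n:ℤ)).eval z))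
          =ᶠ[𝓝 y] iteratedDeriv n (rodF n) :=
        eventually_of_mem (isOpen_Ioo.mem_nhds hy) (fun z hz => (ih z hz).symm)
      have h2 := hS.congr_of_eventuallyEq hev.symm
      rw [iteratedDeriv_succ]
      exact h2.deriv
    set ψ : ℝ → ℝ := fun y => iteratedDeriv (n+1) (rodF (n+1)) y
      - rodC (n+1) * ((1 - y^2) ^ ((1:ℝ)/2) * (Chebyshev.U ℝ ((n:ℤ)+1)).eval y) with hψdef
    have hψ : ∀ y ∈ Set.Ioo (-1:ℝ) 1, HasDerivAt ψ 0 y := by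
      intro y hy
      have hA : HasDerivAt (iteratedDeriv (n+1) (rodF (n+1)))
          (iteratedDeriv (n+2) (rodF (n+1)) y) y := rod_iter_hasDeriv (n+1) (n+1) hy
      have hB := (rod_hasDerivAt_S ((n:ℤ)+1) hy).const_mul (rodC (n+1))
      have hval : iteratedDeriv (n+2) (rodF (n+1)) y
          - rodC (n+1) * ((1 - y^2) ^ (-(1:ℝ)/2) * (-y * (Chebyshev.U ℝ ((n:ℤ)+1)).eval y
            + (1 - y^2) * (derivative (Chebyshev.U ℝ ((n:ℤ)+1))).eval y)) = 0 := by
        rw [rod_lemC n hy, hd1 y hy, ih y hy, rod_sq hy]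
        set a := (1 - y^2) ^ (-(1:ℝ)/2) with ha
        set u := (Chebyshev.U ℝ (n:ℤ)).eval y with hu
        set u' := (derivative (Chebyshev.U ℝ (n:ℤ))).eval y with hu'
        set v := (Chebyshev.U ℝ ((n:ℤ)+1)).eval y with hv
        set v' := (derivative (Chebyshev.U ℝ ((n:ℤ)+1))).eval y with hv'
        have hP := congrArg (eval y) (rod_lemP (n:ℤ))
        simp only [eval_mul, eval_add, eval_sub, eval_neg, eval_pow, eval_X, eval_one,
          eval_ofNat, eval_intCast, eval_natCast, Int.cast_natCast,
          ← hu, ← hu', ← hv, ← hv'] at hP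
        have hC := rodC_succ n
        have hn1 : ((n:ℝ)+1) ≠ 0 := by positivity
        have key : ((n:ℝ)+1) * ((-(2*(n:ℝ)+3)) * (y * (rodC n * (a * (-y * u + (1 - y^2) * u')))
            + ((n:ℝ)+1) * (rodC n * (a * (1 - y^2) * u)))
            - rodC (n+1) * (a * (-y * v + (1 - y^2) * v'))) = 0 := by
          linear_combination (norm := ring_nf)
            (-(rodC (n+1)) * a) * hP
            + (-(a * (-(y^2)*u + y*((1 - y^2)*u') + ((n:ℝ)+1)*(1 - y^2)*u))) * hC
        have := mul_eq_zero.mp key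
        rcases this with h | h
        · exact absurd h hn1
        · linear_combination h
      have := hA.sub hB
      rw [hval] at this
      exact this
    have hconst : ∀ x ∈ Set.Ioo (-1:ℝ) 1, ∀ y ∈ Set.Ioo (-1:ℝ) 1, ψ x = ψ y := by
      intro x hx y hy
      refine (convex_Ioo (-1:ℝ) 1).is_const_of_fderivWithin_eq_zero
        (fun z hz => (hψ z hz).differentiableAt.differentiableWithinAt) ?_ hx hy
      intro z hz
      rw [fderivWithin_of_isOpen isOpen_Ioo hz]
      have hdz : deriv ψ z = 0 := (hψ z hz).deriv
      have hdiff := (hψ z hz).differentiableAt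
      ext
      simp [fderiv_apply_one_eq_deriv, hdz]
    haveI hne : (𝓝[Set.Ioo (-1:ℝ) 1] (1:ℝ)).NeBot := by
      apply mem_closure_iff_nhdsWithin_neBot.mp
      rw [closure_Ioo (by norm_num : (-1:ℝ) ≠ 1)]
      exact ⟨by norm_num, le_refl 1⟩
    have hlim1 : Tendsto (iteratedDeriv (n+1) (rodF (n+1))) (𝓝[Set.Ioo (-1:ℝ) 1] 1) (𝓝 0) := by
      obtain ⟨Q, hQ⟩ := rod_structural (n+1) (n+1)
      have hc : Tendsto (fun y : ℝ => Q.eval y * Real.sqrt (1 - y^2))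
          (𝓝[Set.Ioo (-1:ℝ) 1] 1) (𝓝 (Q.eval 1 * Real.sqrt (1 - 1^2))) := by
        apply ContinuousAt.continuousWithinAt
        fun_prop
      have h0 : Q.eval 1 * Real.sqrt (1 - 1^2) = 0 := by norm_num
      rw [h0] at hc
      apply hc.congr'
      filter_upwards [self_mem_nhdsWithin] with y hy
      rw [hQ y hy]
      have e : ((n+1:ℕ):ℝ) - ((n+1:ℕ):ℝ) + 1/2 = (1:ℝ)/2 := by ring
      rw [e, ← Real.sqrt_eq_rpow]
    have hlim2 : Tendsto (fun y : ℝ => rodC (n+1) * ((1 - y^2) ^ ((1:ℝ)/2)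
        * (Chebyshev.U ℝ ((n:ℤ)+1)).eval y)) (𝓝[Set.Ioo (-1:ℝ) 1] 1) (𝓝 0) := by
      have hc : Tendsto (fun y : ℝ => rodC (n+1) * (Real.sqrt (1 - y^2)
          * (Chebyshev.U ℝ ((n:ℤ)+1)).eval y)) (𝓝[Set.Ioo (-1:ℝ) 1] 1)
          (𝓝 (rodC (n+1) * (Real.sqrt (1 - 1^2) * (Chebyshev.U ℝ ((n:ℤ)+1)).eval 1))) := by
        apply ContinuousAt.continuousWithinAt
        fun_prop
      have h0 : rodC (n+1) * (Real.sqrt (1 - 1^2) * (Chebyshev.U ℝ ((n:ℤ)+1)).eval 1) = 0 := by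
        norm_num
      rw [h0] at hc
      apply hc.congr'
      filter_upwards [self_mem_nhdsWithin] with y hy
      rw [Real.sqrt_eq_rpow]
    intro x hx
    have hlimψ : Tendsto ψ (𝓝[Set.Ioo (-1:ℝ) 1] 1) (𝓝 (ψ x)) := by
      apply tendsto_const_nhds.congr'
      filter_upwards [self_mem_nhdsWithin] with y hy
      exact hconst x hx y hy
    have hlim0 : Tendsto ψ (𝓝[Set.Ioo (-1:ℝ) 1] 1) (𝓝 0) := by
      have h := hlim1.sub hlim2
      rw [sub_zero] at h
      exact h
    have hzero : ψ x = 0 := tendsto_nhds_unique hlimψ hlim0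
    have := sub_eq_zero.mp hzero
    rw [this]
    push_cast
    ring

end RodriguesU

theorem stmt_14 (n : ℕ) (x : ℝ) (hx : x ∈ Set.Ioo (-1:ℝ) 1) :
    (Chebyshev.U ℝ n).eval x =
      ((-1 : ℝ) ^ n * 2 ^ n * (n + 1)! / (2 * n + 1)!) *
        (1 - x ^ 2) ^ (-(1 : ℝ) / 2) *
        iteratedDeriv n (fun y : ℝ => (1 - y ^ 2) ^ ((n : ℝ) + 1 / 2)) x := by
  have hp := rod_pos hx
  have hmain := rod_main n x hx
  rw [show (fun y : ℝ => (1 - y ^ 2) ^ ((n : ℝ) + 1 / 2)) = rodF n from rfl, hmain]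
  have h1 : (1 - x^2) ^ (-(1:ℝ)/2) * (1 - x^2) ^ ((1:ℝ)/2) = 1 := by
    rw [← Real.rpow_add hp]
    norm_num
  have hK : ((-1 : ℝ) ^ n * 2 ^ n * (n + 1)! / (2 * n + 1)!) * rodC n = 1 := by
    unfold rodC
    have f1 : ((2*n+1)! : ℝ) ≠ 0 := Nat.cast_ne_zero.mpr (Nat.factorial_ne_zero _)
    have f2 : ((n+1)! : ℝ) ≠ 0 := Nat.cast_ne_zero.mpr (Nat.factorial_ne_zero _)
    have f3 : (2:ℝ)^n ≠ 0 := by positivity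
    have f4 : (-1:ℝ)^n * (-1)^n = 1 := by
      rw [← pow_add, ← two_mul, pow_mul]
      norm_num
    field_simp
    linear_combination f4
  symm
  calc ((-1 : ℝ) ^ n * 2 ^ n * (n + 1)! / (2 * n + 1)!) * (1 - x ^ 2) ^ (-(1 : ℝ) / 2) *
        (rodC n * ((1 - x^2) ^ ((1:ℝ)/2) * (Chebyshev.U ℝ (n:ℤ)).eval x))
      = (((-1 : ℝ) ^ n * 2 ^ n * (n + 1)! / (2 * n + 1)!) * rodC n)
        * ((1 - x^2) ^ (-(1:ℝ)/2) * (1 - x^2) ^ ((1:ℝ)/2)) * (Chebyshev.U ℝ (n:ℤ)).eval x := by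
        ring
    _ = (Chebyshev.U ℝ (n:ℤ)).eval x := by rw [hK, h1]; ring
end
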